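/- arXiv:1412.4646 — 8 statements merged into one kernel-verified Lean document; each statement's English description precedes it below -/
import Mathlib

section
/- A word of length n contains fewer than n/2 cubic runs. -/
open List

universe u

/-- The factor `w[i..j]` of a word (inclusive positions). -/
def factor {α : Type u} (w : List α) (i j : ℕ) : List α := (w.drop i).take (j - i + 1)

/-- `p` is a period length of the word `u`. -/
def HasPeriodLen {α : Type u} (u : List α) (p : ℕ) : Prop :=
  1 ≤ p ∧ ∀ k, k + p < u.length → u[k]? = u[k + p]?

/-- The smallest period of a word. -/
noncomputable def minPeriod {α : Type u} (u : List α) : ℕ := sInf {p | HasPeriodLen u p}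

/-- `[i..j]` is a run in `w`: the factor is periodic with smallest period at most half
its length, and the periodicity extends neither to the left nor to the right. -/
def IsRun {α : Type u} (w : List α) (i j : ℕ) : Prop :=
  i < j ∧ j < w.length ∧
  2 * minPeriod (factor w i j) ≤ j - i + 1 ∧
  (0 < i → minPeriod (factor w i j) < minPeriod (factor w (i - 1) j)) ∧
  (j + 1 < w.length → minPeriod (factor w i j) < minPeriod (factor w i (j + 1)))

/-- A cubic run: a run whose length is at least three times its smallest period. -/
noncomputable def IsCubicRun {α : Type u} (w : List α) (i j : ℕ) : Prop :=
  IsRun w i j ∧ 3 * minPeriod (factor w i j) ≤ j - i + 1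

namespace CubicAux

variable {α : Type u}

/-! ### Lex toolkit -/

section LexTools

variable (L : LinearOrder α)

lemma lex_iff_lt {u v : List α} :
    List.Lex L.lt u v ↔ (letI := L; letI : LinearOrder (List α) := inferInstance; u < v) :=
  Iff.rfl

lemma lex_asymm {u v : List α} (h1 : List.Lex L.lt u v) (h2 : List.Lex L.lt v u) : False := by
  letI := L; letI : LinearOrder (List α) := inferInstance
  exact lt_asymm (show u < v from h1) (show v < u from h2)

lemma lex_total_of_ne {u v : List α} (h : u ≠ v) :
    List.Lex L.lt u v ∨ List.Lex L.lt v u := by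
  letI := L; letI : LinearOrder (List α) := inferInstance
  rcases lt_or_gt_of_ne h with h' | h'
  · exact Or.inl h'
  · exact Or.inr h'

/-- If two lists agree below `d` and differ at `d` with `a < b`, then `u <lex v`. -/
lemma lex_of_first_diff : ∀ (d : ℕ) (u v : List α),
    (∀ x, x < d → u[x]? = v[x]?) → ∀ a b, u[d]? = some a → v[d]? = some b →
    L.lt a b → List.Lex L.lt u v := by
  intro d
  induction d with
  | zero =>
    intro u v _ a b ha hb hab
    cases u with
    | nil => simp at ha
    | cons x u' =>
      cases v with
      | nil => simp at hb
      | cons y v' =>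
        simp only [getElem?_cons_zero, Option.some.injEq] at ha hb
        subst ha; subst hb
        exact List.Lex.rel hab
  | succ d ih =>
    intro u v hagree a b ha hb hab
    cases u with
    | nil => simp at ha
    | cons x u' =>
      cases v with
      | nil => simp at hb
      | cons y v' =>
        have h0 := hagree 0 (Nat.succ_pos d)
        simp only [getElem?_cons_zero, Option.some.injEq] at h0
        subst h0
        refine List.Lex.cons (ih u' v' ?_ a b ?_ ?_ hab)
        · intro z hz
          have := hagree (z+1) (by omega)
          simpa using this
        · simpa using ha
        · simpa using hb

/-- From a strict lex comparison of equal-length lists, extract the first difference. -/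
lemma lex_first_diff_exists : ∀ {u v : List α}, List.Lex L.lt u v → u.length = v.length →
    ∃ (d : ℕ) (a b : α), (∀ x, x < d → u[x]? = v[x]?) ∧ u[d]? = some a ∧ v[d]? = some b ∧ L.lt a b := by
  intro u v h
  induction h with
  | nil => intro h; simp at h
  | @rel a l₁ b l₂ hab =>
    intro _
    exact ⟨0, a, b, by omega, by simp, by simp, hab⟩
  | @cons a l₁ l₂ h ih =>
    intro hlen
    obtain ⟨d, x, y, hag, hx, hy, hxy⟩ := ih (by simpa using hlen)
    refine ⟨d+1, x, y, ?_, by simpa using hx, by simpa using hy, hxy⟩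
    intro z hz
    match z with
    | 0 => simp
    | z+1 => simpa using hag z (by omega)

/-- A list is never lex-smaller than one of its prefixes (take). -/
lemma not_lex_take : ∀ (u : List α) (k : ℕ), ¬ List.Lex L.lt u (u.take k) := by
  intro u
  induction u with
  | nil => intro k h; rw [List.take_nil] at h; cases h
  | cons x t ih =>
    intro k h
    match k with
    | 0 => cases h
    | k+1 =>
      simp only [take_succ_cons] at h
      cases h with
      | rel h' => exact absurd h' (lt_irrefl _)
      | cons h' => exact ih k h'

lemma lex_singleton {u : List α} {x y : α} (h : List.Lex L.lt u [y])
    (hx : u[0]? = some x) : L.lt x y := by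
  cases u with
  | nil => simp at hx
  | cons a l =>
    simp only [getElem?_cons_zero, Option.some.injEq] at hx
    subst hx
    cases h with
    | rel h' => exact h'
    | cons h' => cases h'

/-- If `u <lex v`, they agree below `d`, and both defined at `d` with distinct values,
then the value of `u` at `d` is smaller. -/
lemma lt_of_lex_of_agree {u v : List α} {d : ℕ} {a b : α}
    (h : List.Lex L.lt u v) (hag : ∀ x, x < d → u[x]? = v[x]?)
    (ha : u[d]? = some a) (hb : v[d]? = some b) (hab : a ≠ b) : L.lt a b := by
  letI := L
  rcases lt_trichotomy a b with h' | h' | h'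
  · exact h'
  · exact absurd h' hab
  · exact absurd (lex_of_first_diff L d v u (fun x hx => (hag x hx).symm) b a hb ha h')
      (fun hc => lex_asymm L h hc)

end LexTools

/-! ### factor and period basics -/

lemma factor_length {w : List α} {i j : ℕ} (hij : i ≤ j) (hj : j < w.length) :
    (factor w i j).length = j - i + 1 := by
  simp only [factor, length_take, length_drop]
  omega

lemma factor_getElem? {w : List α} {i j t : ℕ} (ht : t < j - i + 1) :
    (factor w i j)[t]? = w[i + t]? := by
  simp only [factor, List.getElem?_take, ht, if_true, List.getElem?_drop]

/-- Periodicity of the positions `[i..j]` in `w`. -/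
def PerOn (w : List α) (i j p : ℕ) : Prop := ∀ k, i ≤ k → k + p ≤ j → w[k]? = w[k + p]?

lemma perOn_mono {w : List α} {i j i' j' p : ℕ} (h : PerOn w i j p)
    (h1 : i ≤ i') (h2 : j' ≤ j) : PerOn w i' j' p :=
  fun k hk1 hk2 => h k (le_trans h1 hk1) (le_trans hk2 h2)

lemma hasPeriodLen_iff {w : List α} {i j p : ℕ} (hij : i ≤ j) (hj : j < w.length) :
    HasPeriodLen (factor w i j) p ↔ (1 ≤ p ∧ PerOn w i j p) := by
  constructor
  · rintro ⟨hp, h⟩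
    refine ⟨hp, fun k hk1 hk2 => ?_⟩
    have h' := h (k - i) (by rw [factor_length hij hj]; omega)
    rw [factor_getElem? (by omega), factor_getElem? (by rw [factor_length hij hj] at *; omega)] at h'
    have e1 : i + (k - i) = k := by omega
    have e2 : i + (k - i + p) = k + p := by omega
    rw [e1, e2] at h'
    exact h'
  · rintro ⟨hp, h⟩
    refine ⟨hp, fun k hk => ?_⟩
    rw [factor_length hij hj] at hk
    rw [factor_getElem? (by omega), factor_getElem? (by omega)]
    have := h (i + k) (by omega) (by omega)
    have e : i + (k + p) = i + k + p := by omega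
    rw [e]
    exact this
    
lemma minPeriod_hasPeriodLen (u : List α) : HasPeriodLen u (minPeriod u) := by
  have : (u.length + 1) ∈ {p | HasPeriodLen u p} := ⟨by omega, fun k hk => by omega⟩
  exact Nat.sInf_mem ⟨_, this⟩

lemma minPeriod_le {u : List α} {p : ℕ} (h : HasPeriodLen u p) : minPeriod u ≤ p :=
  Nat.sInf_le h

lemma minPeriod_pos (u : List α) : 1 ≤ minPeriod u := (minPeriod_hasPeriodLen u).1

/-! ### Run structure -/

section Run

variable {w : List α} {i j : ℕ}

lemma run_perOn (hr : IsRun w i j) : PerOn w i j (minPeriod (factor w i j)) :=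
  ((hasPeriodLen_iff (le_of_lt hr.1) hr.2.1).1 (minPeriod_hasPeriodLen _)).2

lemma run_p_bounds (hr : IsRun w i j) :
    1 ≤ minPeriod (factor w i j) ∧ 2 * minPeriod (factor w i j) ≤ j - i + 1 :=
  ⟨minPeriod_pos _, hr.2.2.1⟩

lemma run_left_mismatch (hr : IsRun w i j) (hi : 0 < i) :
    ¬ (w[i-1]? = w[i-1+minPeriod (factor w i j)]?) := by
  intro heq
  have hij : i < j := hr.1
  set p := minPeriod (factor w i j) with hp
  have hper : PerOn w (i-1) j p := by
    intro k hk1 hk2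
    rcases Nat.lt_or_ge k i with hk | hk
    · have : k = i - 1 := by omega
      rw [this]; exact heq
    · exact run_perOn hr k hk hk2
  have : HasPeriodLen (factor w (i-1) j) p :=
    (hasPeriodLen_iff (by omega) hr.2.1).2 ⟨minPeriod_pos _, hper⟩
  have := minPeriod_le this
  have := hr.2.2.2.1 hi
  omega

lemma run_right_mismatch (hr : IsRun w i j) (hj1 : j + 1 < w.length) :
    ¬ (w[j+1-minPeriod (factor w i j)]? = w[j+1]?) := by
  intro heq
  set p := minPeriod (factor w i j) with hp
  have hp1 : 1 ≤ p := minPeriod_pos _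
  have hp2 : 2 * p ≤ j - i + 1 := hr.2.2.1
  have hper : PerOn w i (j+1) p := by
    intro k hk1 hk2
    rcases Nat.lt_or_ge (k + p) (j+1) with hk | hk
    · exact run_perOn hr k hk1 (by omega)
    · have : k = j + 1 - p := by omega
      rw [this]
      have e : j + 1 - p + p = j + 1 := by omega
      rw [e]
      exact heq
  have : HasPeriodLen (factor w i (j+1)) p :=
    (hasPeriodLen_iff (by omega) hj1).2 ⟨hp1, hper⟩
  have := minPeriod_le this
  have := hr.2.2.2.2 hj1
  omega

/-- Every position of a run is determined by the root, reading indices mod `p`. -/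
lemma run_getElem (hr : IsRun w i j) {k : ℕ} (h1 : i ≤ k) (h2 : k ≤ j) :
    w[k]? = (factor w i (i + minPeriod (factor w i j) - 1))[(k - i) % minPeriod (factor w i j)]? := by
  set p := minPeriod (factor w i j) with hp
  have hp1 : 1 ≤ p := minPeriod_pos _
  have hp2 : 2 * p ≤ j - i + 1 := hr.2.2.1
  have hrootlt : i + p - 1 < w.length := by have := hr.1; have := hr.2.1; omega
  induction k using Nat.strong_induction_on with
  | _ k ih =>
    rcases Nat.lt_or_ge k (i + p) with hk | hk
    · have e1 : (k - i) % p = k - i := Nat.mod_eq_of_lt (by omega)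
      rw [e1, factor_getElem? (by omega)]
      congr 1
      omega
    · have hper := run_perOn hr (k - p) (by omega) (by omega)
      have e2 : k - p + p = k := by omega
      rw [e2] at hper
      rw [← hper, ih (k-p) (by omega) (by omega) (by omega)]
      have e3 : k - i = (k - p - i) + p := by omega
      have e4 : (k - p - i) % p = (k - i) % p := by rw [e3, Nat.add_mod_right]
      rw [e4]

end Run

/-! ### Rotations -/

/-- Rotation of a word by `c` positions. -/
def rot (u : List α) (c : ℕ) : List α := u.drop c ++ u.take c

@[simp] lemma rot_length (u : List α) (c : ℕ) : (rot u c).length = u.length := by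
  simp only [rot, length_append, length_take, length_drop]
  omega

lemma rot_zero (u : List α) : rot u 0 = u := by simp [rot]

lemma rot_getElem? {u : List α} {c t : ℕ} (hc : c ≤ u.length) (ht : t < u.length) :
    (rot u c)[t]? = u[(c + t) % u.length]? := by
  rcases Nat.lt_or_ge t (u.length - c) with h | h
  · rw [rot, List.getElem?_append, if_pos (show t < (u.drop c).length by
      simp only [length_drop]; omega), List.getElem?_drop]
    have e : (c + t) % u.length = c + t := Nat.mod_eq_of_lt (by omega)
    rw [e]
  · rw [rot, List.getElem?_append_right (by simp only [length_drop]; omega)]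
    simp only [length_drop]
    rw [List.getElem?_take, if_pos (by omega)]
    congr 1
    have e : c + t = (t - (u.length - c)) + 1 * u.length := by omega
    rw [e, Nat.add_mul_mod_self_right]
    exact (Nat.mod_eq_of_lt (by omega)).symm

lemma rot_rot {u : List α} {c d : ℕ} (hc : c ≤ u.length) (hd : d ≤ u.length)
    (hu : u ≠ []) : rot (rot u c) d = rot u ((c + d) % u.length) := by
  have hlen : 0 < u.length := List.length_pos_iff.2 hu
  apply List.ext_getElem?
  intro t
  rcases Nat.lt_or_ge t u.length with ht | ht
  · have h1 : (rot (rot u c) d)[t]? = (rot u c)[(d + t) % u.length]? := by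
      have := rot_getElem? (u := rot u c) (c := d) (t := t) (by simpa using hd) (by simpa using ht)
      simpa using this
    rw [h1, rot_getElem? hc (Nat.mod_lt _ hlen), rot_getElem? (le_of_lt (Nat.mod_lt _ hlen)) ht,
        Nat.add_mod_mod, Nat.mod_add_mod, Nat.add_assoc]
  · rw [List.getElem?_eq_none (by simpa using ht), List.getElem?_eq_none (by simpa using ht)]

/-! ### The minimal rotation (Lyndon root) -/

/-- The lexicographically minimal rotation of a word, w.r.t. a given linear order. -/
noncomputable def lam (L : LinearOrder α) (rt : List α) : List α :=
  letI := L
  letI : LinearOrder (List α) := inferInstance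
  if h : rt = [] then [] else
    ((Finset.range rt.length).image (rot rt)).min'
      ((Finset.nonempty_range_iff.2 (fun hh => h (List.length_eq_zero_iff.1 hh))).image _)

lemma lam_mem (L : LinearOrder α) {rt : List α} (h : rt ≠ []) :
    ∃ c, c < rt.length ∧ lam L rt = rot rt c := by
  letI := L
  letI : LinearOrder (List α) := inferInstance
  have hmem := Finset.min'_mem ((Finset.range rt.length).image (rot rt))
    ((Finset.nonempty_range_iff.2 (fun hh => h (List.length_eq_zero_iff.1 hh))).image _)
  rw [Finset.mem_image] at hmem
  obtain ⟨c, hc, hrot⟩ := hmem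
  exact ⟨c, Finset.mem_range.1 hc, by rw [lam, dif_neg h, ← hrot]⟩

lemma lam_not_lex (L : LinearOrder α) {rt : List α} (h : rt ≠ []) {c : ℕ}
    (hc : c < rt.length) : ¬ List.Lex L.lt (rot rt c) (lam L rt) := by
  letI := L
  letI : LinearOrder (List α) := inferInstance
  intro hlex
  have hle : lam L rt ≤ rot rt c := by
    rw [lam, dif_neg h]
    exact Finset.min'_le _ _ (Finset.mem_image.2 ⟨c, Finset.mem_range.2 hc, rfl⟩)
  exact absurd hle (not_le.2 (show rot rt c < lam L rt from hlex))

section Lyndon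

variable (L : LinearOrder α) {rt : List α} {p : ℕ}

-- Abstract context: `rt` has length `p ≥ 1` and is "primitive": no
-- divisor `d < p` of `p` is a period of `rt`.
variable (hlen : rt.length = p) (hp : 1 ≤ p)
  (hprim : ∀ d, 1 ≤ d → d < p → d ∣ p → (∀ a, a + d < p → rt[a]? = rt[a+d]?) → False)

include hlen hp hprim

lemma rot_ne_self : ∀ c, 1 ≤ c → c < p → rot rt c ≠ rt := by
  intro c hc1 hc2 heq
  have hgpos : 0 < Nat.gcd c p := Nat.gcd_pos_of_pos_left _ (by omega)
  have hgc : Nat.gcd c p ≤ c := Nat.gcd_le_left _ (by omega)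
  have hgdvd : Nat.gcd c p ∣ p := Nat.gcd_dvd_right c p
  have hcyc : ∀ t, t < p → rt[t]? = rt[(c+t) % p]? := by
    intro t ht
    conv_lhs => rw [← heq]
    rw [rot_getElem? (by omega) (by omega), hlen]
  have hs : ∀ s t, t < p → rt[t]? = rt[(t + c*s) % p]? := by
    intro s
    induction s with
    | zero => intro t ht; simp [Nat.mod_eq_of_lt ht]
    | succ s ih =>
      intro t ht
      have h1 := ih t ht
      have h2 := hcyc ((t + c*s) % p) (Nat.mod_lt _ (by omega))
      rw [h1, h2]
      have e : (c + (t + c * s) % p) % p = (t + c * (s+1)) % p := by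
        rw [Nat.add_mod_mod]
        congr 1
        ring
      rw [e]
  obtain ⟨m, -, hm⟩ := Nat.exists_mul_mod_eq_gcd (show Nat.gcd c p < p by omega)
  have hper : ∀ a', a' + Nat.gcd c p < p → rt[a']? = rt[a' + Nat.gcd c p]? := by
    intro a' ha'
    have h1 := hs m a' (by omega)
    have e : (a' + c * m) % p = a' + Nat.gcd c p := by
      rw [Nat.add_mod, hm, Nat.mod_eq_of_lt (show a' < p by omega),
        Nat.mod_eq_of_lt (by omega)]
    rw [e] at h1
    exact h1
  exact hprim (Nat.gcd c p) (by omega) (by omega) hgdvd hper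

lemma rt_ne_nil : rt ≠ [] := fun h => by rw [h] at hlen; simp at hlen; omega

/-- The key structural lemma: comparing `lam` with its rotation by `c`, the first
difference `d` occurs with `d + c < p`, periodicity below `d`, and an increase at `d`. -/
lemma lam_key : ∀ c, 1 ≤ c → c < p →
    ∃ (d : ℕ) (a b : α), d + c < p ∧
      (∀ x, x < d → (lam L rt)[x]? = (lam L rt)[x+c]?) ∧
      (lam L rt)[d]? = some a ∧ (lam L rt)[d+c]? = some b ∧ L.lt a b := by
  intro c hc1 hc2
  obtain ⟨k₀, hk₀, hlam⟩ := lam_mem L (rt_ne_nil hlen hp hprim)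
  rw [hlen] at hk₀
  set lm := lam L rt with hlm
  have llen : lm.length = p := by rw [hlam, rot_length, hlen]
  have hnil : rt ≠ [] := rt_ne_nil hlen hp hprim
  have hrotrot : ∀ e, e ≤ p → rot lm e = rot rt ((k₀ + e) % p) := by
    intro e he
    rw [hlam, rot_rot (by omega) (by omega) hnil, hlen]
  have hminrot : ∀ e, e ≤ p → ¬ List.Lex L.lt (rot lm e) lm := by
    intro e he
    rw [hrotrot e he]
    exact lam_not_lex L hnil (by rw [hlen]; exact Nat.mod_lt _ (by omega))
  have hneq : ∀ e, 1 ≤ e → e < p → rot lm e ≠ lm := by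
    intro e he1 he2 heq
    rw [hrotrot e (by omega), hlam] at heq
    have h2 : rot (rot rt ((k₀ + e) % p)) (p - k₀) = rot (rot rt k₀) (p - k₀) := by rw [heq]
    rw [rot_rot (by rw [hlen]; exact le_of_lt (Nat.mod_lt _ (by omega))) (by omega) hnil,
        rot_rot (by omega) (by omega) hnil, hlen] at h2
    have e1 : (k₀ + (p - k₀)) % p = 0 := by
      have : k₀ + (p - k₀) = p := by omega
      rw [this, Nat.mod_self]
    have e2 : ((k₀ + e) % p + (p - k₀)) % p = e := by
      rw [Nat.mod_add_mod]
      have : k₀ + e + (p - k₀) = e + p := by omega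
      rw [this, Nat.add_mod_right, Nat.mod_eq_of_lt he2]
    rw [e1, e2, rot_zero] at h2
    exact rot_ne_self hlen hp hprim e he1 he2 h2
  have hlexlam : List.Lex L.lt lm (rot lm c) := by
    rcases lex_total_of_ne L (fun h => hneq c hc1 hc2 h.symm) with h | h
    · exact h
    · exact absurd h (hminrot c (by omega))
  obtain ⟨d, a, b, hag, ha, hb, hab⟩ := lex_first_diff_exists L hlexlam (by simp)
  have hd : d < p := by
    by_contra hcon
    rw [List.getElem?_eq_none (by omega)] at ha
    cases ha
  have hrotx : ∀ x, x < p → (rot lm c)[x]? = lm[(c+x) % p]? := by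
    intro x hx
    rw [rot_getElem? (by omega) (by omega), llen]
  by_cases hcase : d + c < p
  · refine ⟨d, a, b, hcase, ?_, ha, ?_, hab⟩
    · intro x hx
      have h1 := hag x hx
      rw [hrotx x (by omega), Nat.mod_eq_of_lt (by omega), Nat.add_comm c x] at h1
      exact h1
    · have h1 := hb
      rw [hrotx d hd, Nat.mod_eq_of_lt (by omega), Nat.add_comm c d] at h1
      exact h1
  · exfalso
    set e := d + c - p with he
    have he1 : e < c := by omega
    have hlexbad : List.Lex L.lt (rot lm (p - c)) lm := by
      apply lex_of_first_diff L e _ _ ?_ a b ?_ ?_ hab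
      · intro x hx
        have hx2 : x + (p - c) < d := by omega
        have h1 := hag (x + (p - c)) hx2
        rw [hrotx (x + (p - c)) (by omega)] at h1
        have e2 : (c + (x + (p - c))) % p = x := by
          have : c + (x + (p - c)) = x + p := by omega
          rw [this, Nat.add_mod_right, Nat.mod_eq_of_lt (by omega)]
        rw [e2] at h1
        have h3 : (rot lm (p-c))[x]? = lm[(p - c + x) % p]? := by
          rw [rot_getElem? (by omega) (by omega), llen]
        rw [h3, Nat.mod_eq_of_lt (by omega), Nat.add_comm (p-c) x]
        exact h1
      · have h3 : (rot lm (p-c))[e]? = lm[(p - c + e) % p]? := by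
          rw [rot_getElem? (by omega) (by omega), llen]
        rw [h3]
        have e3 : (p - c + e) % p = d := by
          have : p - c + e = d := by omega
          rw [this, Nat.mod_eq_of_lt hd]
        rw [e3]
        exact ha
      · have h1 := hb
        rw [hrotx d hd] at h1
        have e4 : (c + d) % p = e := by
          have : c + d = e + p := by omega
          rw [this, Nat.add_mod_right, Nat.mod_eq_of_lt (by omega)]
        rw [e4] at h1
        exact h1
    exact hminrot (p - c) (by omega) hlexbad

lemma lam_no_period : ∀ c, 1 ≤ c → c < p →
    ¬ (∀ x, x + c < p → (lam L rt)[x]? = (lam L rt)[x+c]?) := by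
  intro c hc1 hc2 hper
  obtain ⟨d, a, b, hdc, _, ha, hb, hab⟩ := lam_key L hlen hp hprim c hc1 hc2
  have := hper d hdc
  rw [ha, hb] at this
  cases this
  exact absurd hab (lt_irrefl _)

lemma lam_lt_drop : ∀ c, 1 ≤ c → c < p →
    List.Lex L.lt (lam L rt) ((lam L rt).drop c) := by
  intro c hc1 hc2
  obtain ⟨d, a, b, hdc, hag, ha, hb, hab⟩ := lam_key L hlen hp hprim c hc1 hc2
  apply lex_of_first_diff L d _ _ ?_ a b ha ?_ hab
  · intro x hx
    rw [List.getElem?_drop, Nat.add_comm c x]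
    exact hag x hx
  · rw [List.getElem?_drop, Nat.add_comm c d]
    exact hb

lemma lam_length : (lam L rt).length = p := by
  obtain ⟨c, hc, hlam⟩ := lam_mem L (rt_ne_nil hlen hp hprim)
  rw [hlam, rot_length, hlen]

lemma lam_head_lt_last (hp2 : 2 ≤ p) :
    ∃ a0 ap, (lam L rt)[0]? = some a0 ∧ (lam L rt)[p-1]? = some ap ∧ L.lt a0 ap := by
  have hlex := lam_lt_drop L hlen hp hprim (p-1) (by omega) (by omega)
  have hlamlen : (lam L rt).length = p := lam_length L hlen hp hprim
  have hdroplen : ((lam L rt).drop (p-1)).length = 1 := by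
    rw [List.length_drop, hlamlen]; omega
  obtain ⟨y, hy⟩ := List.length_eq_one_iff.1 hdroplen
  have hyval : (lam L rt)[p-1]? = some y := by
    have : ((lam L rt).drop (p-1))[0]? = some y := by rw [hy]; rfl
    rw [List.getElem?_drop] at this
    simpa using this
  rw [hy] at hlex
  have h0 : 0 < (lam L rt).length := by omega
  have hx : (lam L rt)[0]? = some ((lam L rt)[0]'h0) := List.getElem?_eq_getElem h0
  exact ⟨_, y, hx, hyval, lex_singleton L hlex hx⟩

end Lyndon

/-! ### Run roots, order choice and Lyndon-root occurrences -/

/-- The minimal period of the run `[i..j]`. -/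
noncomputable def pOf (w : List α) (i j : ℕ) : ℕ := minPeriod (factor w i j)

/-- The root of the run `[i..j]`. -/
noncomputable def rtOf (w : List α) (i j : ℕ) : List α := factor w i (i + pOf w i j - 1)

/-- A fixed (classical) linear order on `α`. -/
noncomputable def L0 (α : Type u) : LinearOrder α := IsWellOrder.linearOrder WellOrderingRel

lemma swap_lt (L : LinearOrder α) (x y : α) :
    (LinearOrder.swap α L).lt x y ↔ L.lt y x := Iff.rfl

/-- Strict comparison of two optional values. -/
def optLt (L : LinearOrder α) (o1 o2 : Option α) : Prop :=
  ∃ a b, o1 = some a ∧ o2 = some b ∧ L.lt a b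

/-- The order associated with a run: chosen so that the letter following the run
is smaller than the letter one period before it. -/
noncomputable def ordOf (w : List α) (i j : ℕ) : LinearOrder α :=
  open Classical in
  if optLt (L0 α) (w[j + 1 - pOf w i j]?) (w[j+1]?) then (L0 α).swap else L0 α

/-- The Lyndon root of a run. -/
noncomputable def lamOf (w : List α) (i j : ℕ) : List α := lam (ordOf w i j) (rtOf w i j)

/-- The marked positions of a run: occurrences of the Lyndon root after the start. -/
noncomputable def HOf (w : List α) (i j : ℕ) : Finset ℕ :=
  open Classical in
  (Finset.Ico 1 w.length).filter
    (fun h => i + 1 ≤ h ∧ h + pOf w i j ≤ j + 1 ∧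
      factor w h (h + pOf w i j - 1) = lamOf w i j)

lemma mem_HOf {w : List α} {i j h : ℕ} :
    h ∈ HOf w i j ↔ ((1 ≤ h ∧ h < w.length) ∧ i + 1 ≤ h ∧ h + pOf w i j ≤ j + 1 ∧
      factor w h (h + pOf w i j - 1) = lamOf w i j) := by
  classical
  simp [HOf, Finset.mem_filter, Finset.mem_Ico]

section RunFacts

variable {w : List α} {i j : ℕ}

lemma pOf_pos : 1 ≤ pOf w i j := minPeriod_pos _

lemma run_bounds (hr : IsRun w i j) :
    i < j ∧ j < w.length ∧ 1 ≤ pOf w i j ∧ 2 * pOf w i j ≤ j - i + 1 :=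
  ⟨hr.1, hr.2.1, minPeriod_pos _, hr.2.2.1⟩

lemma rtOf_length (hr : IsRun w i j) : (rtOf w i j).length = pOf w i j := by
  obtain ⟨h1, h2, h3, h4⟩ := run_bounds hr
  rw [rtOf, factor_length (by omega) (by omega)]
  omega

lemma run_getElem' (hr : IsRun w i j) {k : ℕ} (h1 : i ≤ k) (h2 : k ≤ j) :
    w[k]? = (rtOf w i j)[(k - i) % pOf w i j]? := run_getElem hr h1 h2

/-- No divisor `d < p` of `p` is a period of the root. -/
lemma run_root_prim (hr : IsRun w i j) : ∀ d, 1 ≤ d → d < pOf w i j → d ∣ pOf w i j →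
    (∀ a, a + d < pOf w i j → (rtOf w i j)[a]? = (rtOf w i j)[a+d]?) → False := by
  intro d hd1 hd2 hdvd hper
  obtain ⟨hij, hjn, hp1, hp2⟩ := run_bounds hr
  set p := pOf w i j with hp
  set rt := rtOf w i j with hrt
  have rt_mod : ∀ t, t < p → rt[t]? = rt[t % d]? := by
    intro t
    induction t using Nat.strong_induction_on with
    | _ t ih =>
      intro ht
      rcases Nat.lt_or_ge t d with h | h
      · rw [Nat.mod_eq_of_lt h]
      · have h1 := hper (t - d) (by omega)
        have e : t - d + d = t := by omega
        rw [e] at h1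
        rw [← h1, ih (t-d) (by omega) (by omega)]
        have e2 : t % d = (t - d) % d := by
          conv_lhs => rw [← e, Nat.add_mod_right]
        rw [e2]
    
  have hperon : PerOn w i j d := by
    intro k hk1 hk2
    rw [run_getElem' hr hk1 (by omega), run_getElem' hr (by omega) (by omega)]
    rw [rt_mod ((k-i) % p) (Nat.mod_lt _ (by omega)),
        rt_mod ((k+d-i) % p) (Nat.mod_lt _ (by omega))]
    rw [Nat.mod_mod_of_dvd _ hdvd, Nat.mod_mod_of_dvd _ hdvd]
    have e : k + d - i = (k - i) + d := by omega
    rw [e, Nat.add_mod_right]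
  have : HasPeriodLen (factor w i j) d :=
    (hasPeriodLen_iff (by omega) hjn).2 ⟨hd1, hperon⟩
  have := minPeriod_le this
  rw [← pOf] at this
  omega

/-- Any block of `p` consecutive positions inside a run carries a rotation of the root. -/
lemma occ_rot (hr : IsRun w i j) {g : ℕ} (h1 : i ≤ g) (h2 : g + pOf w i j ≤ j + 1) :
    factor w g (g + pOf w i j - 1) = rot (rtOf w i j) ((g - i) % pOf w i j) := by
  obtain ⟨hij, hjn, hp1, hp2⟩ := run_bounds hr
  set p := pOf w i j with hp
  set rt := rtOf w i j with hrt
  have hrtlen : rt.length = p := rtOf_length hr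
  apply List.ext_getElem?
  intro t
  rcases Nat.lt_or_ge t p with ht | ht
  · rw [factor_getElem? (by omega)]
    rw [run_getElem' hr (by omega) (by omega)]
    rw [rot_getElem? (by rw [hrtlen]; exact le_of_lt (Nat.mod_lt _ (by omega))) (by omega), hrtlen]
    rw [Nat.mod_add_mod]
    have e : g + t - i = g - i + t := by omega
    rw [e]
  · rw [List.getElem?_eq_none, List.getElem?_eq_none]
    · rw [rot_length, hrtlen]; omega
    · rw [factor_length (by omega) (by omega)]; omega

/-- The chosen order makes the letter after the run smaller than its counterpart
one period earlier. -/
lemma ord_prop (hr : IsRun w i j) (hj1 : j + 1 < w.length) :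
    optLt (ordOf w i j) (w[j+1]?) (w[j + 1 - pOf w i j]?) := by
  classical
  obtain ⟨hij, hjn, hp1, hp2⟩ := run_bounds hr
  have hx : ∃ x, w[j + 1 - pOf w i j]? = some x :=
    ⟨_, List.getElem?_eq_getElem (by omega)⟩
  have hy : ∃ y, w[j+1]? = some y := ⟨_, List.getElem?_eq_getElem (by omega)⟩
  obtain ⟨x, hxv⟩ := hx
  obtain ⟨y, hyv⟩ := hy
  have hne : x ≠ y := by
    intro h
    apply run_right_mismatch hr hj1
    rw [← pOf, hxv, hyv, h]
  rw [ordOf]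
  by_cases hc : optLt (L0 α) (w[j + 1 - pOf w i j]?) (w[j+1]?)
  · rw [if_pos hc]
    obtain ⟨a, b, ha, hb, hab⟩ := hc
    exact ⟨b, a, hb, ha, hab⟩
  · rw [if_neg hc]
    refine ⟨y, x, hyv, hxv, ?_⟩
    letI := L0 α
    rcases lt_trichotomy x y with h | h | h
    · exact absurd ⟨x, y, hxv, hyv, h⟩ hc
    · exact absurd h hne
    · exact h

end RunFacts

/-! ### Two marked positions per cubic run -/

section Main

variable {w : List α} {i j i' j' : ℕ}

lemma rtOf_ne_nil (hr : IsRun w i j) : rtOf w i j ≠ [] := by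
  intro h
  have h1 := rtOf_length hr
  have h2 : 1 ≤ pOf w i j := pOf_pos
  rw [h] at h1
  simp only [List.length_nil] at h1
  omega

lemma run_perOn' (hr : IsRun w i j) : PerOn w i j (pOf w i j) := run_perOn hr

lemma two_mem_HOf (hcr : IsCubicRun w i j) :
    ∃ h₁ h₂, h₁ ∈ HOf w i j ∧ h₂ ∈ HOf w i j ∧ h₁ ≠ h₂ := by
  obtain ⟨hr, hcub⟩ := hcr
  obtain ⟨hij, hjn, hp1, hp2⟩ := run_bounds hr
  have hcub' : 3 * pOf w i j ≤ j - i + 1 := hcub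
  set p := pOf w i j with hpdef
  obtain ⟨c, hc, hl⟩ := lam_mem (ordOf w i j) (rtOf_ne_nil hr)
  rw [rtOf_length hr, ← hpdef] at hc
  by_cases hc0 : c = 0
  · subst hc0
    refine ⟨i + p, i + 2*p, ?_, ?_, by omega⟩
    · rw [mem_HOf]
      refine ⟨⟨by omega, by omega⟩, by omega, by omega, ?_⟩
      rw [occ_rot hr (by omega) (by omega)]
      have e : (i + p - i) % p = 0 := by
        have : i + p - i = p := by omega
        rw [this, Nat.mod_self]
      rw [← hpdef, e, ← hl, lamOf]
    · rw [mem_HOf]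
      refine ⟨⟨by omega, by omega⟩, by omega, by omega, ?_⟩
      rw [occ_rot hr (by omega) (by omega)]
      have e : (i + 2*p - i) % p = 0 := by
        have : i + 2*p - i = 2*p := by omega
        rw [this, Nat.mul_mod_left]
      rw [← hpdef, e, ← hl, lamOf]
  · refine ⟨i + c, i + c + p, ?_, ?_, by omega⟩
    · rw [mem_HOf]
      refine ⟨⟨by omega, by omega⟩, by omega, by omega, ?_⟩
      rw [occ_rot hr (by omega) (by omega)]
      have e : (i + c - i) % p = c := by
        have : i + c - i = c := by omega
        rw [this, Nat.mod_eq_of_lt hc]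
      rw [← hpdef, e, ← hl, lamOf]
    · rw [mem_HOf]
      refine ⟨⟨by omega, by omega⟩, by omega, by omega, ?_⟩
      rw [occ_rot hr (by omega) (by omega)]
      have e : (i + c + p - i) % p = c := by
        have : i + c + p - i = c + p := by omega
        rw [this, Nat.add_mod_right, Nat.mod_eq_of_lt hc]
      rw [← hpdef, e, ← hl, lamOf]

/-! ### Distinct runs have disjoint marked sets -/

lemma runs_eq_of_common (hr : IsRun w i j) (hr' : IsRun w i' j')
    (hpp : pOf w i j = pOf w i' j') {h : ℕ}
    (h1 : i ≤ h) (h1' : i' ≤ h) (h2 : h + pOf w i j ≤ j + 1) (h2' : h + pOf w i j ≤ j' + 1) :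
    i = i' ∧ j = j' := by
  obtain ⟨hij, hjn, hp1, hp2⟩ := run_bounds hr
  obtain ⟨hij', hjn', hp1', hp2'⟩ := run_bounds hr'
  set p := pOf w i j with hpdef
  have hfold : minPeriod (factor w i j) = p := by rw [hpdef]; rfl
  have hfold' : minPeriod (factor w i' j') = p := by rw [hpp]; rfl
  have hper : PerOn w i j p := run_perOn hr
  have hper' : PerOn w i' j' p := by
    have h0 := run_perOn hr'
    rwa [hfold'] at h0
  have hglue : PerOn w (min i i') (max j j') p := by
    intro k hk1 hk2
    rcases Nat.lt_or_ge k h with hk | hk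
    · -- k + p ≤ h + p - 1 ≤ min-side end; use the run with the smaller start
      rcases le_total i i' with hii | hii
      · exact hper k (by omega) (by omega)
      · exact hper' k (by omega) (by omega)
    · rcases le_total j j' with hjj | hjj
      · exact hper' k (by omega) (by omega)
      · exact hper k (by omega) (by omega)
  have hi_eq : i = i' := by
    rcases lt_trichotomy i i' with hlt | heq | hgt
    · exfalso
      have hperl : PerOn w (i'-1) j' p := perOn_mono hglue (by omega) (by omega)
      have : HasPeriodLen (factor w (i'-1) j') p :=
        (hasPeriodLen_iff (by omega) hjn').2 ⟨by omega, hperl⟩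
      have hle := minPeriod_le this
      have hlt2 := hr'.2.2.2.1 (by omega)
      rw [hfold'] at hlt2
      omega
    · exact heq
    · exfalso
      have hperl : PerOn w (i-1) j p := perOn_mono hglue (by omega) (by omega)
      have : HasPeriodLen (factor w (i-1) j) p :=
        (hasPeriodLen_iff (by omega) hjn).2 ⟨by omega, hperl⟩
      have hle := minPeriod_le this
      have hlt2 := hr.2.2.2.1 (by omega)
      rw [hfold] at hlt2
      omega
  refine ⟨hi_eq, ?_⟩
  rcases lt_trichotomy j j' with hlt | heq | hgt
  · exfalso
    have hperr : PerOn w i (j+1) p := perOn_mono hglue (by omega) (by omega)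
    have : HasPeriodLen (factor w i (j+1)) p :=
      (hasPeriodLen_iff (by omega) (by omega)).2 ⟨by omega, hperr⟩
    have hle := minPeriod_le this
    have hlt2 := hr.2.2.2.2 (by omega)
    rw [hfold] at hlt2
    omega
  · exact heq
  · exfalso
    have hperr : PerOn w i' (j'+1) p := perOn_mono hglue (by omega) (by omega)
    have : HasPeriodLen (factor w i' (j'+1)) p :=
      (hasPeriodLen_iff (by omega) (by omega)).2 ⟨by omega, hperr⟩
    have hle := minPeriod_le this
    have hlt2 := hr'.2.2.2.2 (by omega)
    rw [hfold'] at hlt2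
    omega

/-- Values of the Lyndon root of a run at an occurrence. -/
lemma lam_occ_val (hr : IsRun w i j) {h : ℕ}
    (hocc : factor w h (h + pOf w i j - 1) = lamOf w i j) {x : ℕ} (hx : x < pOf w i j) :
    (lamOf w i j)[x]? = w[h + x]? := by
  rw [← hocc, factor_getElem? (by have := pOf_pos (w:=w) (i:=i) (j:=j); omega)]

/-- Two distinct runs whose chosen orders agree cannot share a marked position
(asymmetric version: the first run has the smaller period). -/
lemma no_common_same_order (hr : IsRun w i j) (hr' : IsRun w i' j')
    (hord : ordOf w i j = ordOf w i' j') (hpp : pOf w i j < pOf w i' j')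
    {h : ℕ} (hm : h ∈ HOf w i j) (hm' : h ∈ HOf w i' j') : False := by
  obtain ⟨⟨hh1, hhn⟩, hhi, hhj, hocc⟩ := mem_HOf.1 hm
  obtain ⟨⟨_, _⟩, hhi', hhj', hocc'⟩ := mem_HOf.1 hm'
  obtain ⟨hij, hjn, hp1, hp2⟩ := run_bounds hr
  obtain ⟨hij', hjn', hp1', hp2'⟩ := run_bounds hr'
  set p := pOf w i j with hpdef
  set p' := pOf w i' j' with hpdef'
  set L := ordOf w i' j' with hLdef
  have hlen' : (rtOf w i' j').length = p' := rtOf_length hr'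
  have hprim' := run_root_prim hr'
  rw [← hpdef'] at hprim'
  have hlam' : lamOf w i' j' = lam L (rtOf w i' j') := rfl
  have lmlen' : (lamOf w i' j').length = p' := by
    rw [hlam']; exact lam_length L hlen' (by omega) hprim'
  have lmval' : ∀ x, x < p' → (lamOf w i' j')[x]? = w[h + x]? := fun x hx =>
    lam_occ_val hr' hocc' hx
  have hper : PerOn w i j p := run_perOn hr
  rcases Nat.lt_or_ge (j + 1) (h + p') with hB | hA
  · -- Case B : the small run ends inside the root occurrence of the big run
    have hj1n : j + 1 < w.length := by omega
    set t := j + 1 - h with htdef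
    have htp : p ≤ t := by omega
    have htp' : t < p' := by omega
    have hlex : List.Lex L.lt (lamOf w i' j') ((lamOf w i' j').drop p) := by
      rw [hlam']
      exact lam_lt_drop L hlen' (by omega) hprim' p (by omega) (by omega)
    have hag : ∀ x, x < t - p → (lamOf w i' j')[x]? = ((lamOf w i' j').drop p)[x]? := by
      intro x hx
      rw [List.getElem?_drop, lmval' x (by omega), lmval' (p + x) (by omega)]
      have := hper (h + x) (by omega) (by omega)
      have e : h + x + p = h + (p + x) := by omega
      rwa [e] at this
    have ha : (lamOf w i' j')[t - p]? = some (w[j + 1 - p]'(by omega)) := by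
      rw [lmval' (t - p) (by omega)]
      have e : h + (t - p) = j + 1 - p := by omega
      rw [e]
      exact List.getElem?_eq_getElem (by omega)
    have hb : ((lamOf w i' j').drop p)[t - p]? = some (w[j + 1]'(by omega)) := by
      rw [List.getElem?_drop, lmval' (p + (t - p)) (by omega)]
      have e : h + (p + (t - p)) = j + 1 := by omega
      rw [e]
      exact List.getElem?_eq_getElem (by omega)
    have hne : (w[j + 1 - p]'(by omega : j + 1 - p < w.length)) ≠ (w[j + 1]'(by omega)) := by
      intro heq
      apply run_right_mismatch hr hj1n
      show w[j + 1 - p]? = w[j + 1]?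
      rw [List.getElem?_eq_getElem (by omega : j + 1 - p < w.length),
        List.getElem?_eq_getElem (by omega : j + 1 < w.length), heq]
    have hab := lt_of_lex_of_agree L hlex hag ha hb hne
    -- contradiction with the choice of order for the small run
    have hop := ord_prop hr hj1n
    rw [hord] at hop
    obtain ⟨b', a', hb', ha', hba⟩ := hop
    rw [List.getElem?_eq_getElem (by omega : j + 1 < w.length)] at hb'
    rw [← hpdef, List.getElem?_eq_getElem (by omega : j + 1 - p < w.length)] at ha'
    cases hb'
    cases ha'
    letI := L
    exact absurd hab (lt_asymm hba)

  · -- Case A : the whole root occurrence of the big run lies inside the small run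
    have hperiodic : ∀ x, x + p < p' → (lamOf w i' j')[x]? = (lamOf w i' j')[x+p]? := by
      intro x hx
      rw [lmval' x (by omega), lmval' (x+p) (by omega)]
      have := hper (h + x) (by omega) (by omega)
      have e : h + x + p = h + (x + p) := by omega
      rwa [e] at this
    exact lam_no_period L hlen' (by omega) hprim' p (by omega) (by omega) hperiodic

/-- Two runs with opposite chosen orders cannot share a marked position. -/
lemma no_common_cross (hr : IsRun w i j) (hr' : IsRun w i' j')
    (hLM : ∀ x y : α, (ordOf w i j).lt x y ↔ (ordOf w i' j').lt y x)
    (hpp : pOf w i j ≠ pOf w i' j')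
    {h : ℕ} (hm : h ∈ HOf w i j) (hm' : h ∈ HOf w i' j') : False := by
  obtain ⟨⟨hh1, hhn⟩, hhi, hhj, hocc⟩ := mem_HOf.1 hm
  obtain ⟨⟨_, _⟩, hhi', hhj', hocc'⟩ := mem_HOf.1 hm'
  obtain ⟨hij, hjn, hp1, hp2⟩ := run_bounds hr
  obtain ⟨hij', hjn', hp1', hp2'⟩ := run_bounds hr'
  set p := pOf w i j with hpdef
  set p' := pOf w i' j' with hpdef'
  set L := ordOf w i j with hLdef
  set M := ordOf w i' j' with hMdef
  -- the letter preceding the occurrence equals the last letter of both roots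
  have hperA : PerOn w i j p := run_perOn hr
  have hperA' : PerOn w i' j' p' := run_perOn hr'
  have hprev : w[h-1]? = (lamOf w i j)[p-1]? := by
    rw [lam_occ_val hr hocc (by omega)]
    have hper := hperA (h-1) (by omega) (by omega)
    have e : h - 1 + p = h + (p - 1) := by omega
    rwa [e] at hper
  have hprev' : w[h-1]? = (lamOf w i' j')[p'-1]? := by
    rw [lam_occ_val hr' hocc' (by omega)]
    have hper' := hperA' (h-1) (by omega) (by omega)
    have e : h - 1 + p' = h + (p' - 1) := by omega
    rwa [e] at hper'
  have hcur : (lamOf w i j)[0]? = w[h]? := by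
    simpa using lam_occ_val hr hocc (show 0 < pOf w i j by omega)
  have hcur' : (lamOf w i' j')[0]? = w[h]? := by
    simpa using lam_occ_val hr' hocc' (show 0 < pOf w i' j' by omega)
  obtain ⟨a, hav⟩ : ∃ a, w[h-1]? = some a := ⟨_, List.getElem?_eq_getElem (by omega)⟩
  obtain ⟨z, hzv⟩ : ∃ z, w[h]? = some z := ⟨_, List.getElem?_eq_getElem (by omega)⟩
  have hlen : (rtOf w i j).length = p := rtOf_length hr
  have hlen' : (rtOf w i' j').length = p' := rtOf_length hr'
  have hprim := run_root_prim hr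
  have hprim' := run_root_prim hr'
  rw [← hpdef] at hprim
  rw [← hpdef'] at hprim'
  -- for each run with period ≥ 2, first letter < last letter; with period 1 they agree
  have hfl : lam L (rtOf w i j) = lamOf w i j := rfl
  have hfl' : lam M (rtOf w i' j') = lamOf w i' j' := rfl
  have side : ∀ (hp2p : 2 ≤ p), L.lt z a := by
    intro hp2p
    obtain ⟨a0, ap, h0, hpp1, hlt⟩ := lam_head_lt_last L hlen (by omega) hprim hp2p
    rw [hfl, hcur, hzv] at h0
    rw [hfl, ← hprev, hav] at hpp1
    cases h0; cases hpp1
    exact hlt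
  have side' : ∀ (hp2p : 2 ≤ p'), M.lt z a := by
    intro hp2p
    obtain ⟨a0, ap, h0, hpp1, hlt⟩ := lam_head_lt_last M hlen' (by omega) hprim' hp2p
    rw [hfl', hcur', hzv] at h0
    rw [hfl', ← hprev', hav] at hpp1
    cases h0; cases hpp1
    exact hlt
  have eq1 : ∀ (hq : p = 1), z = a := by
    intro hq
    have : (lamOf w i j)[0]? = (lamOf w i j)[p-1]? := by rw [hq]
    rw [hcur, hzv, ← hprev, hav] at this
    cases this
    rfl
  have eq1' : ∀ (hq : p' = 1), z = a := by
    intro hq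
    have : (lamOf w i' j')[0]? = (lamOf w i' j')[p'-1]? := by rw [hq]
    rw [hcur', hzv, ← hprev', hav] at this
    cases this
    rfl
  rcases Nat.lt_or_ge p 2 with hp1c | hp2c
  · -- p = 1
    have hq : p = 1 := by omega
    have hq' : 2 ≤ p' := by omega
    have hza := side' hq'
    rw [eq1 hq] at hza
    letI := M
    exact absurd hza (lt_irrefl _)
  · rcases Nat.lt_or_ge p' 2 with hp1c' | hp2c'
    · have hq' : p' = 1 := by omega
      have hza := side hp2c
      rw [eq1' hq'] at hza
      letI := L
      exact absurd hza (lt_irrefl _)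
    · have h1 := side hp2c
      have h2 := side' hp2c'
      rw [← hLM a z] at h2
      letI := L
      exact absurd h1 (lt_asymm h2)


/-- Marked sets of distinct cubic runs are disjoint. -/
lemma HOf_disjoint (hcr : IsCubicRun w i j) (hcr' : IsCubicRun w i' j')
    (hne : ¬ (i = i' ∧ j = j')) : Disjoint (HOf w i j) (HOf w i' j') := by
  classical
  rw [Finset.disjoint_left]
  intro h hm hm'
  have hr := hcr.1
  have hr' := hcr'.1
  obtain ⟨⟨hh1, hhn⟩, hhi, hhj, hocc⟩ := mem_HOf.1 hm
  obtain ⟨⟨_, _⟩, hhi', hhj', hocc'⟩ := mem_HOf.1 hm'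
  by_cases hpp : pOf w i j = pOf w i' j'
  · exact hne (runs_eq_of_common hr hr' hpp (h := h) (by omega) (by omega) hhj (by rw [hpp]; exact hhj'))
  · by_cases h1 : optLt (L0 α) (w[j + 1 - pOf w i j]?) (w[j+1]?) <;>
      by_cases h2 : optLt (L0 α) (w[j' + 1 - pOf w i' j']?) (w[j'+1]?)
    · have hord : ordOf w i j = ordOf w i' j' := by
        unfold ordOf
        rw [if_pos h1, if_pos h2]
      rcases Nat.lt_or_ge (pOf w i j) (pOf w i' j') with hlt | hge
      · exact no_common_same_order hr hr' hord hlt hm hm'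
      · exact no_common_same_order hr' hr hord.symm (by omega) hm' hm
    · have hLM : ∀ x y : α, (ordOf w i j).lt x y ↔ (ordOf w i' j').lt y x := by
        unfold ordOf
        rw [if_pos h1, if_neg h2]
        exact fun x y => Iff.rfl
      exact no_common_cross hr hr' hLM hpp hm hm'
    · have hLM : ∀ x y : α, (ordOf w i j).lt x y ↔ (ordOf w i' j').lt y x := by
        unfold ordOf
        rw [if_neg h1, if_pos h2]
        exact fun x y => Iff.rfl
      exact no_common_cross hr hr' hLM hpp hm hm'
    · have hord : ordOf w i j = ordOf w i' j' := by
        unfold ordOf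
        rw [if_neg h1, if_neg h2]
      rcases Nat.lt_or_ge (pOf w i j) (pOf w i' j') with hlt | hge
      · exact no_common_same_order hr hr' hord hlt hm hm'
      · exact no_common_same_order hr' hr hord.symm (by omega) hm' hm

end Main

end CubicAux

open CubicAux in
/-- A word of length `n` contains fewer than `n/2` cubic runs. -/
theorem cubic_runs_lt_half_length {α : Type u} (w : List α) (hw : w ≠ []) :
    2 * {ij : ℕ × ℕ | IsCubicRun w ij.1 ij.2}.ncard < w.length := by
  classical
  have hfin : {ij : ℕ × ℕ | IsCubicRun w ij.1 ij.2}.Finite := by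
    apply Set.Finite.subset ((Set.finite_Iio w.length).prod (Set.finite_Iio w.length))
    rintro ⟨a, b⟩ hab
    have h1 : a < b := hab.1.1
    have h2 : b < w.length := hab.1.2.1
    exact ⟨by simp only [Set.mem_Iio]; omega, by simp only [Set.mem_Iio]; omega⟩
  rw [Set.ncard_eq_toFinset_card _ hfin]
  set T := hfin.toFinset with hT
  have hdisj : ∀ u ∈ T, ∀ v ∈ T, u ≠ v →
      Disjoint (HOf w u.1 u.2) (HOf w v.1 v.2) := by
    intro u hu v hv huv
    rw [hT, Set.Finite.mem_toFinset] at hu hv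
    refine HOf_disjoint hu hv ?_
    rintro ⟨e1, e2⟩
    exact huv (Prod.ext_iff.2 ⟨e1, e2⟩)
  have hcard : ∑ v ∈ T, (HOf w v.1 v.2).card
      = (T.biUnion (fun v => HOf w v.1 v.2)).card := (Finset.card_biUnion hdisj).symm
  have h2 : ∀ v ∈ T, 2 ≤ (HOf w v.1 v.2).card := by
    intro v hv
    rw [hT, Set.Finite.mem_toFinset] at hv
    obtain ⟨h₁, h₂, m1, m2, hne⟩ := two_mem_HOf hv
    exact Finset.one_lt_card.2 ⟨h₁, m1, h₂, m2, hne⟩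
  have hsum : T.card * 2 ≤ ∑ v ∈ T, (HOf w v.1 v.2).card := by
    have := Finset.card_nsmul_le_sum T (fun v => (HOf w v.1 v.2).card) 2 h2
    simpa [smul_eq_mul] using this
  have hbound : (T.biUnion (fun v => HOf w v.1 v.2)).card ≤ (Finset.Ico 1 w.length).card := by
    apply Finset.card_le_card
    apply Finset.biUnion_subset.2
    intro v _
    exact Finset.filter_subset _ _
  have hico : (Finset.Ico 1 w.length).card = w.length - 1 := by
    rw [Nat.card_Ico]
  have hn : 1 ≤ w.length := List.length_pos_iff.2 hw
  omega
end

section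
/- Let x² = (vu)² be a square whose root conjugate uv is border-free. Then at least one of the positions |v| or |vuv| is a critical position of x², i.e., the local period at that position equals |uv|. -/
open List

universe u

/-- A border of `u`: a nonempty proper prefix that is also a suffix. -/
def IsBorder {α : Type u} (b u : List α) : Prop := b ≠ [] ∧ b ≠ u ∧ b <+: u ∧ b <:+ u

/-- A word is border-free if it has no border. -/
def BorderFree {α : Type u} (u : List α) : Prop := ∀ b, ¬ IsBorder b u
/-- `y` is a local repetition word at position `m` of `z`: `y` is nonempty, `y` is a
suffix of `z[0..m-1]` or `z[0..m-1]` is a suffix of `y`, and `y` is a prefix of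
`z[m..]` or `z[m..]` is a prefix of `y`. -/
def LocalRep {α : Type u} (z : List α) (m : ℕ) (y : List α) : Prop :=
  y ≠ [] ∧ (y <:+ z.take m ∨ z.take m <:+ y) ∧ (y <+: z.drop m ∨ z.drop m <+: y)

/-- The local period at position `m` of `z`: the length of the shortest local
repetition word at `m`. -/
noncomputable def localPeriod {α : Type u} (z : List α) (m : ℕ) : ℕ :=
  sInf {ℓ | ∃ y, LocalRep z m y ∧ y.length = ℓ}

/-! ### Auxiliary periodicity machinery -/

/-- `w` has period `c` on the index interval `[lo, hi)`. -/
def PerOn {α : Type u} (w : List α) (c lo hi : ℕ) : Prop :=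
  ∀ j, lo ≤ j → j + c < hi → w[j]? = w[j + c]?

lemma perOn_sub {α : Type u} {w : List α} {c1 c2 lo hi : ℕ}
    (h1 : PerOn w c1 lo hi) (h2 : PerOn w c2 lo hi) (hlt : c1 < c2)
    (hlen : lo + c1 + c2 ≤ hi) : PerOn w (c2 - c1) lo hi := by
  intro j hj hjg
  by_cases hcase : j + c2 < hi
  · have e1 := h1 (j + (c2 - c1)) (by omega) (by omega)
    have e2 := h2 j hj hcase
    have ieq : j + (c2 - c1) + c1 = j + c2 := by omega
    rw [ieq] at e1
    rw [e2]; exact e1.symm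
  · have hge : lo + c1 ≤ j := by omega
    have e1 := h1 (j - c1) (by omega) (by omega)
    have e2 := h2 (j - c1) (by omega) (by omega)
    have i1 : j - c1 + c1 = j := by omega
    have i2 : j - c1 + c2 = j + (c2 - c1) := by omega
    rw [i1] at e1; rw [i2] at e2
    rw [← e1]; exact e2

lemma perOn_gcd {α : Type u} {w : List α} {lo hi : ℕ} :
    ∀ n c1 c2, c1 + c2 ≤ n → 1 ≤ c1 → 1 ≤ c2 → lo + c1 + c2 ≤ hi →
      PerOn w c1 lo hi → PerOn w c2 lo hi → PerOn w (Nat.gcd c1 c2) lo hi := by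
  intro n
  induction n with
  | zero => intro c1 c2 hn hc1 _ _ _ _; exact absurd hn (by omega)
  | succ n ih =>
    intro c1 c2 hn hc1 hc2 hlen h1 h2
    rcases lt_trichotomy c1 c2 with h | h | h
    · have hrec := ih c1 (c2 - c1) (by omega) hc1 (by omega) (by omega) h1
        (perOn_sub h1 h2 h hlen)
      rwa [Nat.gcd_sub_self_right (le_of_lt h)] at hrec
    · subst h; rwa [Nat.gcd_self]
    · have hrec := ih c2 (c1 - c2) (by omega) hc2 (by omega) (by omega) h2
        (perOn_sub h2 h1 h (by omega))
      rw [Nat.gcd_sub_self_right (le_of_lt h)] at hrec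
      rwa [Nat.gcd_comm]

lemma perOn_ext_left {α : Type u} {w : List α} {c g lo lo' hi : ℕ}
    (hc : 1 ≤ c) (hlo : lo ≤ lo') (hlen : lo' + c + g ≤ hi)
    (h1 : PerOn w c lo hi) (h2 : PerOn w g lo' hi) : PerOn w g lo hi := by
  have key : ∀ k j, lo' - j ≤ k → lo ≤ j → j + g < hi → w[j]? = w[j + g]? := by
    intro k
    induction k with
    | zero => intro j hk hj hjg; exact h2 j (by omega) hjg
    | succ k ih =>
      intro j hk hj hjg
      by_cases hcase : lo' ≤ j
      · exact h2 j hcase hjg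
      · have e1 := h1 j hj (by omega)
        have e2 := h1 (j + g) (by omega) (by omega)
        have e3 := ih (j + c) (by omega) (by omega) (by omega)
        have ieq : j + g + c = j + c + g := by omega
        rw [ieq] at e2
        rw [e1, e3]; exact e2.symm
  intro j hj hjg; exact key (lo' - j) j le_rfl hj hjg

lemma perOn_ext_right {α : Type u} {w : List α} {c g lo hi hi' : ℕ}
    (hc : 1 ≤ c) (hlen : lo + c + g ≤ hi') (hhi : hi' ≤ hi)
    (h1 : PerOn w c lo hi) (h2 : PerOn w g lo hi') : PerOn w g lo hi := by
  have key : ∀ k j, j ≤ k → lo ≤ j → j + g < hi → w[j]? = w[j + g]? := by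
    intro k
    induction k with
    | zero =>
      intro j hk hj hjg
      by_cases hcase : j + g < hi'
      · exact h2 j hj hcase
      · exact absurd hk (by omega)
    | succ k ih =>
      intro j hk hj hjg
      by_cases hcase : j + g < hi'
      · exact h2 j hj hcase
      · have hge : lo + c ≤ j := by omega
        have e1 := h1 (j - c) (by omega) (by omega)
        have e2 := ih (j - c) (by omega) (by omega) (by omega)
        have e3 := h1 (j - c + g) (by omega) (by omega)
        have i1 : j - c + c = j := by omega
        have i3 : j - c + g + c = j + g := by omega
        rw [i1] at e1; rw [i3] at e3
        rw [← e1, e2]; exact e3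
  intro j hj hjg; exact key j j le_rfl hj hjg

/-- Core combinatorial lemma: `(vu)²` admits no local repetition word shorter than
`|uv|` at both positions `|v|` and `|vuv|` when `uv` is border-free. -/
lemma no_short_reps {α : Type u} (u v : List α) (hbf : BorderFree (u ++ v))
    (y y' : List α)
    (hy : LocalRep ((v ++ u) ++ (v ++ u)) v.length y)
    (hy' : LocalRep ((v ++ u) ++ (v ++ u)) (v ++ u ++ v).length y')
    (hl : y.length < (u ++ v).length) (hl' : y'.length < (u ++ v).length) : False := by
  have hP : (u ++ v).length = u.length + v.length := length_append
  have hz1 : (v ++ u) ++ (v ++ u) = v ++ (u ++ (v ++ u)) := by simp [List.append_assoc]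
  have hz2 : (v ++ u) ++ (v ++ u) = (v ++ u ++ v) ++ u := by simp [List.append_assoc]
  have htk1 : take v.length ((v ++ u) ++ (v ++ u)) = v := by
    rw [hz1]; exact take_left' rfl
  have hdp1 : drop v.length ((v ++ u) ++ (v ++ u)) = u ++ (v ++ u) := by
    rw [hz1]; exact drop_left' rfl
  have htk2 : take (v ++ u ++ v).length ((v ++ u) ++ (v ++ u)) = v ++ u ++ v := by
    rw [hz2]; exact take_left' rfl
  have hdp2 : drop (v ++ u ++ v).length ((v ++ u) ++ (v ++ u)) = u := by
    rw [hz2]; exact drop_left' rfl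
  obtain ⟨hyne, hyt, hyd⟩ := hy
  obtain ⟨hyne', hyt', hyd'⟩ := hy'
  rw [htk1] at hyt
  rw [hdp1] at hyd
  rw [htk2] at hyt'
  rw [hdp2] at hyd'
  -- `y` is a prefix of `u ++ v`
  have hyuv : y <+: u ++ v := by
    rcases hyd with h | h
    · refine prefix_of_prefix_length_le h ?_ (le_of_lt hl)
      exact ⟨u, by simp⟩
    · exfalso
      have := h.length_le
      simp only [length_append] at this
      omega
  -- `y'` is a suffix of `u ++ v`
  have hyvu : y' <:+ u ++ v := by
    rcases hyt' with h | h
    · refine suffix_of_suffix_length_le h ?_ (le_of_lt hl')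
      exact ⟨v, by simp [List.append_assoc]⟩
    · exfalso
      have := h.length_le
      simp only [length_append] at this
      omega
  -- y is not a suffix of v (else border)
  have hyv : ¬ y <:+ v := by
    intro h
    refine hbf y ⟨hyne, ?_, hyuv, h.trans (suffix_append u v)⟩
    rintro rfl; exact lt_irrefl _ hl
  -- y' is not a prefix of u (else border)
  have hyu : ¬ y' <+: u := by
    intro h
    refine hbf y' ⟨hyne', ?_, h.trans (prefix_append u v), hyvu⟩
    rintro rfl; exact lt_irrefl _ hl'
  -- decompose y = s ++ v
  have hvy : v <:+ y := by
    rcases hyt with h | h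
    · exact absurd h hyv
    · exact h
  obtain ⟨s, hs⟩ := hvy
  have hsne : s ≠ [] := by
    rintro rfl
    exact hyv (by rw [← hs]; simp)
  -- decompose y' = u ++ w
  have huy : u <+: y' := by
    rcases hyd' with h | h
    · exact absurd h hyu
    · exact h
  obtain ⟨w, hw⟩ := huy
  have hwne : w ≠ [] := by
    rintro rfl
    exact hyu (by rw [← hw]; simp)
  -- prefix fact : s ++ v <+: u ++ v
  have hsv : s ++ v <+: u ++ v := hs ▸ hyuv
  -- suffix fact : u ++ w <:+ u ++ v
  have huw : u ++ w <:+ u ++ v := hw ▸ hyvu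
  have hylen : y.length = s.length + v.length := by rw [← hs, length_append]
  have hylen' : y'.length = u.length + w.length := by rw [← hw, length_append]
  have ha1 : 1 ≤ s.length := length_pos_iff.mpr hsne
  have hw1 : 1 ≤ w.length := length_pos_iff.mpr hwne
  have halt : s.length < u.length := by omega
  obtain ⟨t, ht⟩ := hsv
  obtain ⟨q, hq⟩ := huw
  have hqlen : q.length + w.length = v.length := by
    have := congrArg List.length hq
    simp only [length_append] at this
    omega
  have hd1 : 1 ≤ q.length := by omega
  have hdlt : q.length < v.length := by omega
  -- period e = |u| - |s| on [a, P)
  have H2 : PerOn (u ++ v) (u.length - s.length) s.length (u.length + v.length) := by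
    intro j hj hjc
    have l1 : (u ++ v)[j]? = v[j - s.length]? := by
      rw [← ht, List.append_assoc, getElem?_append_right hj, getElem?_append,
        if_pos (by omega)]
    have l2 : (u ++ v)[j + (u.length - s.length)]? = v[j - s.length]? := by
      rw [getElem?_append_right (by omega : u.length ≤ j + (u.length - s.length))]
      congr 1
      omega
    rw [l1, l2]
  -- period d = |q| on [0, |u| + d)
  have H1 : PerOn (u ++ v) q.length 0 (u.length + q.length) := by
    intro j _ hjc
    have l1 : (u ++ v)[j]? = u[j]? := by
      rw [getElem?_append, if_pos (by omega)]
    have l2 : (u ++ v)[j + q.length]? = u[j]? := by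
      rw [← hq, getElem?_append_right (by omega : q.length ≤ j + q.length)]
      have i1 : j + q.length - q.length = j := by omega
      rw [i1, getElem?_append, if_pos (by omega)]
    rw [l1, l2]
  set a := s.length with hadef
  set e := u.length - s.length with hedef
  set d := q.length with hddef
  have he1 : 1 ≤ e := by omega
  set N := u.length + d with hNdef
  set P := u.length + v.length with hPdef
  have hNP : N ≤ P := by omega
  -- restrict both periods to the overlap [a, N)
  have H2N : PerOn (u ++ v) e a N := fun j hj hjc => H2 j hj (by omega)
  have H1N : PerOn (u ++ v) d a N := fun j _ hjc => H1 j (Nat.zero_le _) hjc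
  set g := Nat.gcd e d with hgdef
  have hg1 : 1 ≤ g := Nat.gcd_pos_of_pos_left _ he1
  have hge : g ≤ e := Nat.gcd_le_left _ he1
  have hgd : g ≤ d := Nat.gcd_le_right _ hd1
  have Hg : PerOn (u ++ v) g a N :=
    perOn_gcd (e + d) e d le_rfl he1 hd1 (by omega) H2N H1N
  -- extend to [0, N) and [a, P)
  have Hleft : PerOn (u ++ v) g 0 N :=
    perOn_ext_left hd1 (Nat.zero_le a) (by omega) H1 Hg
  have Hright : PerOn (u ++ v) g a P :=
    perOn_ext_right he1 (by omega) hNP H2 Hg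
  -- combine: period g on all of u ++ v
  have Hall : PerOn (u ++ v) g 0 P := by
    intro j hj hjc
    by_cases h : j + g < N
    · exact Hleft j hj h
    · exact Hright j (by omega) hjc
  -- build a border of length P - g
  have hbd : (u ++ v).drop g = (u ++ v).take ((u ++ v).length - g) := by
    apply ext_getElem?
    intro n
    rw [getElem?_drop, getElem?_take]
    by_cases h : n < (u ++ v).length - g
    · rw [if_pos h]
      have := (Hall n (Nat.zero_le _) (by omega)).symm
      rwa [show g + n = n + g from by omega]
    · rw [if_neg h]
      exact getElem?_eq_none (by omega)
  have hbpre : (u ++ v).take ((u ++ v).length - g) <+: u ++ v := take_prefix _ _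
  have hbsuf : (u ++ v).take ((u ++ v).length - g) <:+ u ++ v :=
    ⟨(u ++ v).take g, by rw [← hbd, take_append_drop]⟩
  have hblen : ((u ++ v).take ((u ++ v).length - g)).length = (u ++ v).length - g := by
    rw [length_take]; omega
  refine hbf ((u ++ v).take ((u ++ v).length - g)) ⟨?_, ?_, hbpre, hbsuf⟩
  · intro h0
    rw [h0] at hblen
    simp only [length_nil] at hblen
    omega
  · intro h0
    rw [h0] at hblen
    omega

/-- If `x² = (vu)²` is a square whose root conjugate `uv` is border-free, then at least
one of the positions `|v|` or `|vuv|` is critical on `x²`: the local period there equals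
`|uv|`. -/
theorem critical_position_of_borderFree_conjugate {α : Type u} (u v : List α)
    (hne : u ++ v ≠ []) (hbf : BorderFree (u ++ v)) :
    localPeriod ((v ++ u) ++ (v ++ u)) v.length = (u ++ v).length ∨
    localPeriod ((v ++ u) ++ (v ++ u)) (v ++ u ++ v).length = (u ++ v).length := by
  by_contra hcon
  push_neg at hcon
  obtain ⟨h1, h2⟩ := hcon
  have hz1 : (v ++ u) ++ (v ++ u) = v ++ (u ++ (v ++ u)) := by simp [List.append_assoc]
  have hz2 : (v ++ u) ++ (v ++ u) = (v ++ u ++ v) ++ u := by simp [List.append_assoc]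
  have hp1 : (u ++ v).length ∈
      {ℓ | ∃ y, LocalRep ((v ++ u) ++ (v ++ u)) v.length y ∧ y.length = ℓ} := by
    refine ⟨u ++ v, ⟨hne, ?_, ?_⟩, rfl⟩
    · rw [hz1, take_left]
      exact Or.inr (suffix_append u v)
    · rw [hz1, drop_left]
      exact Or.inl ⟨u, by simp [List.append_assoc]⟩
  have hp2 : (u ++ v).length ∈
      {ℓ | ∃ y, LocalRep ((v ++ u) ++ (v ++ u)) (v ++ u ++ v).length y ∧ y.length = ℓ} := by
    refine ⟨u ++ v, ⟨hne, ?_, ?_⟩, rfl⟩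
    · rw [hz2, take_left]
      exact Or.inl ⟨v, by simp [List.append_assoc]⟩
    · rw [hz2, drop_left]
      exact Or.inr (prefix_append u v)
  have hle1 : localPeriod ((v ++ u) ++ (v ++ u)) v.length ≤ (u ++ v).length :=
    Nat.sInf_le hp1
  have hle2 : localPeriod ((v ++ u) ++ (v ++ u)) (v ++ u ++ v).length ≤ (u ++ v).length :=
    Nat.sInf_le hp2
  have hlt1 := lt_of_le_of_ne hle1 h1
  have hlt2 := lt_of_le_of_ne hle2 h2
  obtain ⟨y, hyrep, hylen⟩ := Nat.sInf_mem ⟨_, hp1⟩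
  obtain ⟨y', hyrep', hylen'⟩ := Nat.sInf_mem ⟨_, hp2⟩
  exact no_short_reps u v hbf y y' hyrep hyrep'
    (by rw [hylen]; exact hlt1) (by rw [hylen']; exact hlt2)
end

section
/- In the square x² = (vu)², the local period at position |v| has a word y such that v is a proper suffix of y, provided uv is border-free and u, v are nonempty. -/
open List

universe u

/-- In the square `x² = (vu)²` with `uv` border-free and `u`, `v` nonempty, the local
period at position `|v|` is realised by a word `y` having `v` as a proper suffix. -/
theorem local_period_word_has_v_as_proper_suffix {α : Type u} (u v : List α)
    (hu : u ≠ []) (hv : v ≠ []) (hbf : BorderFree (u ++ v)) :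
    ∃ y, LocalRep ((v ++ u) ++ (v ++ u)) v.length y ∧
      y.length = localPeriod ((v ++ u) ++ (v ++ u)) v.length ∧
      v <:+ y ∧ v ≠ y := by

  set z := (v ++ u) ++ (v ++ u) with hz
  have htake : z.take v.length = v := by
    rw [hz, List.append_assoc, List.take_left]
  have hdrop : z.drop v.length = u ++ (v ++ u) := by
    rw [hz, List.append_assoc, List.drop_left]
  -- auxiliary: no local rep word can be a suffix of v
  have aux : ∀ y : List α, y ≠ [] → y <:+ v →
      (y <+: (u ++ (v ++ u)) ∨ (u ++ (v ++ u)) <+: y) → False := by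
    intro y hne hys hpre
    have hylen : y.length ≤ v.length := hys.length_le
    have hpre' : y <+: u ++ (v ++ u) := by
      rcases hpre with h | h
      · exact h
      · exfalso
        have := h.length_le
        simp only [List.length_append] at this
        have hu1 : 1 ≤ u.length := List.length_pos_iff.mpr hu
        omega
    have h1 : y <+: u ++ v := by
      have h2 : (u ++ v) <+: u ++ (v ++ u) := by
        rw [← List.append_assoc]; exact List.prefix_append _ _
      refine List.prefix_of_prefix_length_le hpre' h2 ?_
      simp only [List.length_append]; omega
    have h3 : y <:+ u ++ v := hys.trans (List.suffix_append _ _)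
    have h4 : y ≠ u ++ v := by
      intro h
      have := congrArg List.length h
      simp only [List.length_append] at this
      have hu1 : 1 ≤ u.length := List.length_pos_iff.mpr hu
      omega
    exact hbf y ⟨hne, h4, h1, h3⟩
  -- key: every local rep word has v as a proper suffix
  have key : ∀ y : List α, LocalRep z v.length y → v <:+ y ∧ v ≠ y := by
    rintro y ⟨hne, hsuf, hpre⟩
    rw [htake] at hsuf
    rw [hdrop] at hpre
    rcases hsuf with h | h
    · exact (aux y hne h hpre).elim
    · refine ⟨h, ?_⟩
      rintro rfl
      exact aux v hne List.suffix_rfl hpre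
  -- the set of local rep lengths is nonempty
  have hmem : (u ++ v).length ∈ {ℓ | ∃ y, LocalRep z v.length y ∧ y.length = ℓ} := by
    refine ⟨u ++ v, ⟨?_, ?_, ?_⟩, rfl⟩
    · simp [hu]
    · rw [htake]; exact Or.inr (List.suffix_append _ _)
    · rw [hdrop]; left
      rw [← List.append_assoc]; exact List.prefix_append _ _
  have := Nat.sInf_mem ⟨_, hmem⟩
  obtain ⟨y, hy, hlen⟩ := this
  obtain ⟨h1, h2⟩ := key y hy
  exact ⟨y, hy, hlen, h1, h2⟩
end

section
/- If p and q are words such that some word has a factor admitting period lengths |p| and |q| and of length |p| + |q|, then p and q are powers of a common word (both are powers of some word r). -/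
open List

universe u

/-- `listPow u n` is the `n`-th power `u^n` of the word `u`. -/
def listPow {α : Type u} (v : List α) : ℕ → List α
  | 0 => []
  | n + 1 => v ++ listPow v n

/-- A word is primitive if it is not a proper power. -/
def Primitive {α : Type u} (v : List α) : Prop :=
  v ≠ [] ∧ ∀ r n, 2 ≤ n → v ≠ listPow r n

/-- `c` is a conjugate (rotation) of `v`. -/
def IsConjWord {α : Type u} (v c : List α) : Prop := ∃ s t, v = s ++ t ∧ c = t ++ s

lemma listPow_length {α : Type u} (v : List α) (n : ℕ) :
    (listPow v n).length = n * v.length := by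
  induction n with
  | zero => simp [listPow]
  | succ n ih => simp [listPow, ih]; ring

lemma getElem?_listPow {α : Type u} (v : List α) (hv : 0 < v.length) :
    ∀ n k, k < n * v.length → (listPow v n)[k]? = v[k % v.length]? := by
  intro n
  induction n with
  | zero => intro k hk; omega
  | succ n ih =>
    intro k hk
    rw [Nat.succ_mul] at hk
    show (v ++ listPow v n)[k]? = _
    rw [List.getElem?_append]
    rcases lt_or_ge k v.length with h | h
    · rw [if_pos h, Nat.mod_eq_of_lt h]
    · rw [if_neg (by omega), ih (k - v.length) (by omega), Nat.mod_eq_sub_mod h]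

lemma take_period {α : Type u} (z : List α) (m p : ℕ) (hm : m ≤ z.length)
    (h : HasPeriodLen z p) : HasPeriodLen (z.take m) p := by
  refine ⟨h.1, fun k hk => ?_⟩
  rw [List.length_take] at hk
  rw [List.getElem?_take, List.getElem?_take, if_pos (by omega), if_pos (by omega)]
  exact h.2 k (by omega)

lemma period_mod {α : Type u} (z : List α) (d : ℕ) (h : HasPeriodLen z d) :
    ∀ i, i < z.length → z[i]? = z[i % d]? := by
  intro i
  induction i using Nat.strong_induction_on with
  | _ i ih =>
    intro hi
    rcases lt_or_ge i d with hd | hd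
    · rw [Nat.mod_eq_of_lt hd]
    · have h1 : (i - d) + d = i := by omega
      have := h.2 (i - d) (by omega)
      rw [h1] at this
      rw [← this, ih (i - d) (by have := h.1; omega) (by omega), Nat.mod_eq_sub_mod hd]

lemma reduce {α : Type u} (z : List α) (a b : ℕ) (ha : 1 ≤ a) (hab : a < b)
    (hlen : a + b ≤ z.length) (Ha : HasPeriodLen z a)
    (H' : HasPeriodLen (z.take (z.length - a)) (Nat.gcd a b)) :
    HasPeriodLen z (Nat.gcd a b) := by
  set g := Nat.gcd a b with hg
  set m := z.length - a with hm
  have hgba : g ≤ b - a := Nat.le_of_dvd (by omega)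
    (Nat.dvd_sub (Nat.gcd_dvd_right a b) (Nat.gcd_dvd_left a b))
  have hml : (z.take m).length = m := by
    rw [List.length_take]; omega
  have hget : ∀ j, j < m → (z.take m)[j]? = z[j]? := by
    intro j hj; rw [List.getElem?_take, if_pos hj]
  refine ⟨H'.1, fun k hk => ?_⟩
  rcases lt_or_ge (k + g) m with h | h
  · have := H'.2 k (by omega)
    rwa [hget k (by omega), hget (k + g) (by omega)] at this
  · have hak : a ≤ k := by omega
    have e1 : z[k - a]? = z[k]? := by
      have := Ha.2 (k - a) (by omega)
      rwa [show k - a + a = k by omega] at this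
    have e2 : z[k + g - a]? = z[k + g]? := by
      have := Ha.2 (k + g - a) (by omega)
      rwa [show k + g - a + a = k + g by omega] at this
    have := H'.2 (k - a) (by rw [hml]; omega)
    rw [hget (k - a) (by omega), hget (k - a + g) (by omega),
      show k - a + g = k + g - a by omega, e1, e2] at this
    exact this

lemma fineWilf {α : Type u} :
    ∀ n (z : List α) a b, a + b ≤ n → 1 ≤ a → 1 ≤ b → a + b ≤ z.length →
      HasPeriodLen z a → HasPeriodLen z b → HasPeriodLen z (Nat.gcd a b) := by
  intro n
  induction n with
  | zero => intro z a b h; omega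
  | succ n ih =>
    intro z a b hn ha hb hlen Ha Hb
    rcases lt_trichotomy a b with hab | hab | hab
    · refine reduce z a b ha hab hlen Ha ?_
      rw [← Nat.gcd_sub_self_right hab.le]
      refine ih (z.take (z.length - a)) a (b - a) (by omega) ha (by omega)
        (by rw [List.length_take]; omega) (take_period z _ a (by omega) Ha) ?_
      refine ⟨by omega, fun k hk => ?_⟩
      rw [List.length_take] at hk
      rw [List.getElem?_take, List.getElem?_take, if_pos (by omega), if_pos (by omega)]
      have e1 := Hb.2 k (by omega)
      have e2 := Ha.2 (k + (b - a)) (by omega)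
      rw [show k + (b - a) + a = k + b by omega] at e2
      rw [e1, e2]
    · subst hab
      rwa [Nat.gcd_self]
    · rw [Nat.gcd_comm]
      refine reduce z b a hb hab (by omega) Hb ?_
      rw [← Nat.gcd_sub_self_right hab.le]
      refine ih (z.take (z.length - b)) b (a - b) (by omega) hb (by omega)
        (by rw [List.length_take]; omega) (take_period z _ b (by omega) Hb) ?_
      refine ⟨by omega, fun k hk => ?_⟩
      rw [List.length_take] at hk
      rw [List.getElem?_take, List.getElem?_take, if_pos (by omega), if_pos (by omega)]
      have e1 := Ha.2 k (by omega)
      have e2 := Hb.2 (k + (a - b)) (by omega)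
      rw [show k + (a - b) + b = k + a by omega] at e2
      rw [e1, e2]

/-- Periodicity lemma application: if a word of length `|p| + |q|` has `p` as a prefix,
`q` as a suffix, and admits both `|p|` and `|q|` as period lengths, then `p` and `q` are
powers of a common word. -/
theorem roots_powers_of_common_word {α : Type u} (p q z : List α)
    (hlen : z.length = p.length + q.length)
    (hp : p <+: z) (hq : q <:+ z)
    (hpp : HasPeriodLen z p.length) (hqp : HasPeriodLen z q.length) :
    ∃ r k m, p = listPow r k ∧ q = listPow r m := by
  set a := p.length
  set b := q.length
  have ha : 1 ≤ a := hpp.1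
  have hb : 1 ≤ b := hqp.1
  set d := Nat.gcd a b with hd
  have hd1 : 1 ≤ d := Nat.gcd_pos_of_pos_left _ (by omega)
  have hda : d ∣ a := Nat.gcd_dvd_left a b
  have hdb : d ∣ b := Nat.gcd_dvd_right a b
  have hdle : d ≤ a := Nat.le_of_dvd (by omega) hda
  have hz : HasPeriodLen z d :=
    fineWilf z.length z a b (by omega) ha hb (by omega) hpp hqp
  set r := z.take d with hr
  have hrl : r.length = d := by rw [hr, List.length_take]; omega
  have hrz : ∀ j, j < d → r[j]? = z[j]? := by
    intro j hj; rw [hr, List.getElem?_take, if_pos hj]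
  refine ⟨r, a / d, b / d, ?_, ?_⟩
  · have hpt : p = z.take a := List.prefix_iff_eq_take.mp hp
    apply List.ext_getElem?
    intro n
    have hl : (listPow r (a / d)).length = a := by
      rw [listPow_length, hrl, Nat.div_mul_cancel hda]
    rcases lt_or_ge n a with hn | hn
    · rw [hpt, List.getElem?_take, if_pos hn,
        getElem?_listPow r (by omega) _ n (by rw [hrl, Nat.div_mul_cancel hda]; exact hn),
        hrl, hrz _ (Nat.mod_lt _ (by omega)), ← period_mod z d hz n (by omega)]
    · rw [List.getElem?_eq_none (by rw [hpt, List.length_take]; omega),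
        List.getElem?_eq_none (by omega)]
  · have hqt : q = z.drop a := by
      have := List.suffix_iff_eq_drop.mp hq
      rwa [show z.length - b = a by omega] at this
    apply List.ext_getElem?
    intro n
    have hl : (listPow r (b / d)).length = b := by
      rw [listPow_length, hrl, Nat.div_mul_cancel hdb]
    rcases lt_or_ge n b with hn | hn
    · rw [hqt, List.getElem?_drop,
        getElem?_listPow r (by omega) _ n (by rw [hrl, Nat.div_mul_cancel hdb]; exact hn),
        hrl, hrz _ (Nat.mod_lt _ (by omega)),
        period_mod z d hz (a + n) (by omega)]
      congr 1
      obtain ⟨c, hc⟩ := hda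
      rw [hc, Nat.mul_add_mod]
    · rw [List.getElem?_eq_none (by rw [hqt, List.length_drop]; omega),
        List.getElem?_eq_none (by omega)]
end

section
/- Let w be a Lyndon word occurring as the factor at interval [i..i+ℓ-1] of a larger word. If the Lroot of a run lies inside this interval but the run's Oroot starts at a position ≥ i+ℓ, then the Lroot ends at position i+ℓ-1 and the Oroot starts at position i+ℓ. -/
open List

universe u

/-- `k` is the starting position of the greatest proper suffix of the factor `w[i..j]`,
with respect to the strict order `lt` on words. -/
def IsGreatestProperSuffixPos {α : Type u} (lt : List α → List α → Prop)
    (w : List α) (i j k : ℕ) : Prop :=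
  i < k ∧ k ≤ j ∧ ∀ k', i < k' → k' ≤ j → k' ≠ k → lt (factor w k' j) (factor w k j)
/-- `u` is a Lyndon word for the alphabet order `r`: nonempty and lexicographically
smaller than each of its proper nonempty suffixes. -/
def IsLyndonWrt {α : Type u} (r : α → α → Prop) (v : List α) : Prop :=
  v ≠ [] ∧ ∀ t, t <:+ v → t ≠ v → t ≠ [] → List.Lex r v t

/-- The run `[i..j]` in `w` is governed by the order `r`: either the run ends the word,
or the letter following the run is `r`-smaller than the letter one period before it. -/
noncomputable def UseOrd {α : Type u} (r : α → α → Prop) (w : List α) (i j : ℕ) : Prop :=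
  j + 1 = w.length ∨
    ∃ a b, w[j + 1]? = some a ∧ w[j + 1 - minPeriod (factor w i j)]? = some b ∧ r a b

/-- `v` is the Lyndon root (w.r.t. the order `r`) of the run `[i..j]` of `w`:
the Lyndon conjugate of its root. -/
def LyndonRootOf {α : Type u} (r : α → α → Prop) (w : List α) (i j : ℕ) (v : List α) : Prop :=
  IsLyndonWrt r v ∧ IsConjWord (factor w i (i + minPeriod (factor w i j) - 1)) v

/-- `[a..b]` is the Lroot of the run `[i..j]` of `w`: the interval of the first occurrence,
inside the run, of the Lyndon root of the run, taken with respect to the lexicographic order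
determined by the letter following the run. -/
noncomputable def IsLroot {α : Type u} [LinearOrder α] (w : List α) (i j a b : ℕ) : Prop :=
  IsRun w i j ∧
  ∃ v, ((UseOrd (· < ·) w i j ∧ LyndonRootOf (· < ·) w i j v) ∨
        (¬ UseOrd (· < ·) w i j ∧ LyndonRootOf (· > ·) w i j v)) ∧
    i ≤ a ∧ b ≤ j ∧ b + 1 = a + v.length ∧ factor w a b = v ∧
    ∀ a', i ≤ a' → a' < a → factor w a' (a' + v.length - 1) ≠ v
/-- `[a..b]` is the Oroot of the run `[i..j]` of `w` (Bannai et al.): if the run ends the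
word, or the letter following the run is smaller than the letter one period before it,
it is the first occurrence of a Lyndon root of the run that is not a prefix of the run;
otherwise it is the interval of the length-`p` prefix of the greatest proper suffix of
the run factor. -/
noncomputable def IsOroot {α : Type u} [LinearOrder α] (w : List α) (i j a b : ℕ) : Prop :=
  IsRun w i j ∧ b + 1 = a + minPeriod (factor w i j) ∧
  ((UseOrd (· < ·) w i j ∧ i < a ∧ b ≤ j ∧
      ∃ v, (LyndonRootOf (· < ·) w i j v ∨ LyndonRootOf (· > ·) w i j v) ∧
        factor w a b = v ∧
        ∀ a', i < a' → a' < a → factor w a' (a' + minPeriod (factor w i j) - 1) ≠ v) ∨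
    (¬ UseOrd (· < ·) w i j ∧
      IsGreatestProperSuffixPos (List.Lex (· < ·)) w i j a))

/-- `[a..b]` is the Oroot of the run `[i..j]` of `w` obtained with respect to the
alphabet order `r`: the run is governed by `r`, and `[a..b]` is the first occurrence of
the `r`-Lyndon root of the run that is not a prefix of the run. -/
noncomputable def IsOrootOrd {α : Type u} (r : α → α → Prop) (w : List α) (i j a b : ℕ) : Prop :=
  IsRun w i j ∧ UseOrd r w i j ∧ b + 1 = a + minPeriod (factor w i j) ∧ i < a ∧ b ≤ j ∧
  LyndonRootOf r w i j (factor w a b) ∧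
  ∀ a', i < a' → a' < a → factor w a' (a' + minPeriod (factor w i j) - 1) ≠ factor w a b


theorem factor_getElem?_aux {α : Type u} (w : List α) (a b k : ℕ) :
    (factor w a b)[k]? = if k < b - a + 1 then w[a + k]? else none := by
  simp [factor, List.getElem?_take, List.getElem?_drop]

theorem factor_length_aux {α : Type u} (w : List α) (a b : ℕ) (h1 : a ≤ b) (h2 : b < w.length) :
    (factor w a b).length = b - a + 1 := by
  simp [factor]
  omega

theorem period_point_aux {α : Type u} (w : List α) (ir jr p m : ℕ)
    (hp : HasPeriodLen (factor w ir jr) p) (hj : jr < w.length) (hij : ir ≤ jr)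
    (h1 : ir ≤ m) (h2 : m + p ≤ jr) : w[m]? = w[m + p]? := by
  have hp1 := hp.1
  have hlen : (factor w ir jr).length = jr - ir + 1 := factor_length_aux w ir jr hij hj
  have h := hp.2 (m - ir) (by omega)
  rw [factor_getElem?_aux, factor_getElem?_aux, if_pos (by omega), if_pos (by omega)] at h
  have e1 : ir + (m - ir) = m := by omega
  have e2 : ir + (m - ir + p) = m + p := by omega
  rwa [e1, e2] at h

theorem factor_shift_aux {α : Type u} (w : List α) (ir jr p a b a' b' : ℕ)
    (hp : HasPeriodLen (factor w ir jr) p) (hj : jr < w.length) (hij : ir ≤ jr)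
    (h1 : ir ≤ a) (ha' : a' = a + p) (hb : b + 1 = a + p) (hb' : b' + 1 = a' + p)
    (h2 : b' ≤ jr) : factor w a b = factor w a' b' := by
  have hp1 := hp.1
  apply List.ext_getElem?
  intro k
  rw [factor_getElem?_aux, factor_getElem?_aux]
  by_cases hk : k < p
  · rw [if_pos (by omega), if_pos (by omega)]
    have h := period_point_aux w ir jr p (a + k) hp hj hij (by omega) (by omega)
    rw [h]
    congr 1
    omega
  · rw [if_neg (by omega), if_neg (by omega)]

theorem not_lex_append_aux {α : Type u} [LinearOrder α] (l t : List α) :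
    ¬ List.Lex (· < ·) (l ++ t) l := by
  induction l with
  | nil => intro h; cases h
  | cons a l ih =>
    intro h
    cases h with
    | cons h => exact ih h
    | rel h => exact lt_irrefl _ h

/-- If a Lyndon word occupies the interval `[i..i+ℓ-1]`, a run has its Lroot inside this
interval, and the run's Oroot starts at a position `≥ i+ℓ`, then the Lroot ends at
position `i+ℓ-1` and the Oroot starts at position `i+ℓ`. -/
theorem oroot_after_lyndon_interval {α : Type u} [LinearOrder α] (w : List α)
    (i ℓ ir jr aL bL aO bO : ℕ) (hℓ : 0 < ℓ)
    (hlyn : IsLyndonWrt (· < ·) (factor w i (i + ℓ - 1)))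
    (hL : IsLroot w ir jr aL bL) (hO : IsOroot w ir jr aO bO)
    (hin1 : i ≤ aL) (hin2 : bL ≤ i + ℓ - 1) (hout : i + ℓ ≤ aO) :
    bL = i + ℓ - 1 ∧ aO = i + ℓ := by
  obtain ⟨hrun, v, hvcase, haL, hbLj, hbL, hfacL, hminL⟩ := hL
  obtain ⟨_, hbO, hOc⟩ := hO
  obtain ⟨hij, hjlen, h2p, _, _⟩ := hrun
  set p := minPeriod (factor w ir jr) with hpdef
  have hne : {q | HasPeriodLen (factor w ir jr) q}.Nonempty := by
    refine ⟨(factor w ir jr).length, ?_, ?_⟩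
    · rw [factor_length_aux w ir jr (le_of_lt hij) hjlen]; omega
    · intro k hk; exact absurd hk (by omega)
  have hp : HasPeriodLen (factor w ir jr) p := Nat.sInf_mem hne
  have hp1 : 1 ≤ p := hp.1
  have hvlen : v.length = p := by
    have hconj : IsConjWord (factor w ir (ir + p - 1)) v := by
      rcases hvcase with ⟨_, _, h⟩ | ⟨_, _, h⟩ <;> exact h
    obtain ⟨s, t, hst, hv⟩ := hconj
    have hl : (factor w ir (ir + p - 1)).length = p := by
      rw [factor_length_aux w ir (ir + p - 1) (by omega) (by omega)]; omega
    rw [hst, List.length_append] at hl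
    rw [hv, List.length_append]
    omega
  have hOle : aO ≤ ir + p := by
    by_contra hgt
    push_neg at hgt
    rcases hOc with ⟨_, haO, hbOj, v', _, hfacO, hminO⟩ | ⟨_, hg1, hg2, hg3⟩
    · have heq := factor_shift_aux w ir jr p (aO - p) (aO - p + p - 1) aO bO hp hjlen
        (le_of_lt hij) (by omega) (by omega) (by omega) (by omega) hbOj
      exact hminO (aO - p) (by omega) (by omega) (heq.trans hfacO)
    · have hlex := hg3 (aO - p) (by omega) (by omega) (by omega)
      have hpre : List.take (jr - aO + 1) (factor w (aO - p) jr) = factor w aO jr := by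
        apply List.ext_getElem?
        intro k
        rw [List.getElem?_take, factor_getElem?_aux, factor_getElem?_aux]
        by_cases hk : k < jr - aO + 1
        · rw [if_pos hk, if_pos hk, if_pos (show k < jr - (aO - p) + 1 by omega)]
          have h := period_point_aux w ir jr p (aO - p + k) hp hjlen (le_of_lt hij)
            (by omega) (by omega)
          rw [h]
          congr 1
          omega
        · rw [if_neg hk, if_neg hk]
      rw [← List.take_append_drop (jr - aO + 1) (factor w (aO - p) jr), hpre] at hlex
      exact not_lex_append_aux _ _ hlex
  exact ⟨by omega, by omega⟩
end

section
/- Let w be a Lyndon word occurring at interval [i..i+ℓ-1]. If the Lroot of a run lies inside this interval but its Oroot starts before position i, then the Lroot starts exactly at position i. -/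
open List

universe u

section Aux
variable {α : Type u}

lemma aux_lex_append {r : α → α → Prop} :
    ∀ {u t : List α}, List.Lex r u t → t.length ≤ u.length →
      ∀ (x y : List α), List.Lex r (u ++ x) (t ++ y) := by
  intro u t h
  induction h with
  | nil => intro hlen; simp at hlen
  | @cons a l1 l2 h ih =>
      intro hlen x y
      exact List.Lex.cons (ih (by simpa using hlen) x y)
  | @rel a b l1 l2 hab =>
      intro _ x y
      exact List.Lex.rel hab

lemma aux_lex_swap {r : α → α → Prop} :
    ∀ {u t : List α}, List.Lex (fun a b => r b a) u t → t.length ≤ u.length →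
      List.Lex r t u := by
  intro u t h
  induction h with
  | nil => intro hlen; simp at hlen
  | @cons a l1 l2 h ih => intro hlen; exact List.Lex.cons (ih (by simpa using hlen))
  | @rel a b l1 l2 hab => intro _; exact List.Lex.rel hab

lemma aux_lex_asymm [LinearOrder α] :
    ∀ {u t : List α}, List.Lex (· < ·) u t → List.Lex (· < ·) t u → False := by
  intro u t h
  induction h with
  | nil => intro h2; cases h2
  | @cons a l1 l2 h ih =>
      intro h2
      cases h2 with
      | cons h2' => exact ih h2'
      | rel hr => exact lt_irrefl _ hr
  | @rel a b l1 l2 hab =>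
      intro h2
      cases h2 with
      | cons _ => exact lt_irrefl _ hab
      | rel hr2 => exact lt_asymm hab hr2

lemma aux_lyndon_rot {r : α → α → Prop} {v x y : List α} (hl : IsLyndonWrt r v)
    (hv : v = x ++ y) (hx : x ≠ []) (hy : y ≠ []) : List.Lex r v (y ++ x) := by
  have hsuf : y <:+ v := ⟨x, hv.symm⟩
  have hlen : v.length = x.length + y.length := by rw [hv]; simp
  have hne : y ≠ v := by
    intro h
    apply hx
    have hx0 : x.length = 0 := by
      have := congrArg List.length h
      omega
    exact List.eq_nil_of_length_eq_zero hx0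
  have h1 : List.Lex r v y := hl.2 y hsuf hne hy
  have h2 := aux_lex_append h1 (by omega) [] x
  simpa using h2

lemma factor_length (w : List α) (a b : ℕ) :
    (factor w a b).length = min (b - a + 1) (w.length - a) := by
  simp [factor]

lemma factor_getElem? (w : List α) (a b n : ℕ) (h : n < b - a + 1) :
    (factor w a b)[n]? = w[a + n]? := by
  simp [factor, List.getElem?_take, h, List.getElem?_drop]

lemma factor_getElem?_none (w : List α) (a b n : ℕ) (h : b - a + 1 ≤ n) :
    (factor w a b)[n]? = none := by
  apply List.getElem?_eq_none
  rw [factor_length]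
  omega

lemma factor_split (w : List α) {a m b : ℕ} (h1 : a < m) (h2 : m ≤ b) :
    factor w a b = factor w a (m - 1) ++ factor w m b := by
  unfold factor
  have e1 : b - a + 1 = (m - a) + (b - m + 1) := by omega
  rw [e1, List.take_add, List.drop_drop]
  have e2 : m - 1 - a + 1 = m - a := by omega
  have e3 : a + (m - a) = m := by omega
  rw [e2, e3]

lemma factor_shift (w : List α) (p : ℕ) {ir jr : ℕ}
    (hper : ∀ q, ir ≤ q → q + p ≤ jr → w[q]? = w[q + p]?) {a b : ℕ}
    (ha : ir ≤ a) (hb : b + p ≤ jr) (hab : a ≤ b) :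
    factor w a b = factor w (a + p) (b + p) := by
  apply List.ext_getElem?
  intro n
  by_cases h : n < b - a + 1
  · rw [factor_getElem? _ _ _ _ h, factor_getElem? _ _ _ _ (by omega : n < (b + p) - (a + p) + 1)]
    have hq := hper (a + n) (by omega) (by omega)
    rw [show a + n + p = a + p + n by omega] at hq
    exact hq
  · rw [factor_getElem?_none _ _ _ _ (by omega), factor_getElem?_none _ _ _ _ (by omega)]

lemma factor_take (w : List α) {a b p : ℕ} (hp : 1 ≤ p) (hpb : p ≤ b - a + 1) :
    (factor w a b).take p = factor w a (a + p - 1) := by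
  unfold factor
  rw [List.take_take]
  congr 1
  omega

lemma factor_drop (w : List α) {a b d : ℕ} (hd : d ≤ b - a) :
    (factor w a b).drop d = factor w (a + d) b := by
  unfold factor
  rw [List.drop_take, List.drop_drop]
  congr 1
  omega

lemma minPeriod_spec (w : List α) {a b : ℕ} (hab : a ≤ b) (hb : b < w.length) :
    HasPeriodLen (factor w a b) (minPeriod (factor w a b)) := by
  have h : minPeriod (factor w a b) ∈ {p | HasPeriodLen (factor w a b) p} := by
    apply Nat.sInf_mem
    refine ⟨(factor w a b).length, ?_, fun k hk => by omega⟩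
    rw [factor_length]
    omega
  exact h

end Aux

/-- If a Lyndon word occupies the interval `[i..i+ℓ-1]`, a run has its Lroot inside this
interval, and the run's Oroot starts before position `i`, then the Lroot starts exactly
at position `i`. -/
theorem oroot_before_lyndon_interval {α : Type u} [LinearOrder α] (w : List α)
    (i ℓ ir jr aL bL aO bO : ℕ) (hℓ : 0 < ℓ)
    (hlyn : IsLyndonWrt (· < ·) (factor w i (i + ℓ - 1)))
    (hL : IsLroot w ir jr aL bL) (hO : IsOroot w ir jr aO bO)
    (hin1 : i ≤ aL) (hin2 : bL ≤ i + ℓ - 1) (hout : aO < i) :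
    aL = i := by
  obtain ⟨hrun, v, hvcase, haL, hbLjr, hbL1, hfacL, hmin⟩ := hL
  obtain ⟨hir_jr, hjr_len, h2p, -, -⟩ := hrun
  obtain ⟨-, -, hOcase⟩ := hO
  set p := minPeriod (factor w ir jr) with hp_def
  have hp := minPeriod_spec w (le_of_lt hir_jr) hjr_len
  have hp1 : 1 ≤ p := hp.1
  have hflen : (factor w ir jr).length = jr - ir + 1 := by rw [factor_length]; omega
  have hper : ∀ q, ir ≤ q → q + p ≤ jr → w[q]? = w[q + p]? := by
    intro q hq1 hq2
    have h := hp.2 (q - ir) (by rw [hflen]; omega)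
    rw [factor_getElem? _ _ _ _ (by omega), factor_getElem? _ _ _ _ (by omega)] at h
    rw [show ir + (q - ir) = q by omega, show ir + (q - ir + p) = q + p by omega] at h
    exact h
  have hconj : IsConjWord (factor w ir (ir + p - 1)) v := by
    rcases hvcase with ⟨-, -, hc⟩ | ⟨-, -, hc⟩ <;> exact hc
  have hrootlen : (factor w ir (ir + p - 1)).length = p := by
    rw [factor_length]; omega
  have hvlen : v.length = p := by
    obtain ⟨s, t, h1, h2⟩ := hconj
    have e1 := congrArg List.length h1
    have e2 := congrArg List.length h2
    simp only [List.length_append] at e1 e2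
    omega
  have hbL : bL + 1 = aL + p := by omega
  have haO : ir < aO := by
    rcases hOcase with ⟨-, h, -⟩ | ⟨-, hgs⟩
    · exact h
    · exact hgs.1
  have haLub : aL < ir + p := by
    by_contra hcon
    push_neg at hcon
    have heq : factor w (aL - p) (aL - 1) = factor w aL bL := by
      have h := factor_shift w p hper (a := aL - p) (b := aL - 1) (by omega) (by omega) (by omega)
      rw [show aL - p + p = aL by omega, show aL - 1 + p = bL by omega] at h
      exact h
    apply hmin (aL - p) (by omega) (by omega)
    rw [hvlen, show aL - p + p - 1 = aL - 1 by omega, heq]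
    exact hfacL
  rcases hvcase with ⟨hu, hlv, -⟩ | ⟨hnu, hlv, -⟩
  · -- UseOrd case: v is Lyndon w.r.t. <
    by_contra hne
    have hilt : i < aL := lt_of_le_of_ne hin1 (Ne.symm hne)
    have hlenw : bL < w.length := by omega
    -- the rotation c = s ++ t at position i, v = t ++ s
    have hs_shift : factor w i (aL - 1) = factor w (i + p) bL := by
      have h := factor_shift w p hper (a := i) (b := aL - 1) (by omega) (by omega) (by omega)
      rw [show aL - 1 + p = bL by omega] at h
      exact h
    have hc_def : factor w i (i + p - 1) =
        factor w i (aL - 1) ++ factor w aL (i + p - 1) := by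
      have h := factor_split w (a := i) (m := aL) (b := i + p - 1) hilt (by omega)
      rw [show aL - 1 = aL - 1 by rfl] at h
      exact h
    have hv_def : factor w aL bL =
        factor w aL (i + p - 1) ++ factor w i (aL - 1) := by
      have h := factor_split w (a := aL) (m := i + p) (b := bL) (by omega) (by omega)
      rw [show i + p - 1 = i + p - 1 by rfl, ← hs_shift] at h
      exact h
    have hsne : factor w i (aL - 1) ≠ [] := by
      apply List.ne_nil_of_length_pos
      rw [factor_length]; omega
    have htne : factor w aL (i + p - 1) ≠ [] := by
      apply List.ne_nil_of_length_pos
      rw [factor_length]; omega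
    have hveq : v = factor w aL (i + p - 1) ++ factor w i (aL - 1) := by
      rw [← hfacL]; exact hv_def
    have hlex_vc : List.Lex (· < ·) v (factor w i (aL - 1) ++ factor w aL (i + p - 1)) :=
      aux_lyndon_rot hlv hveq htne hsne
    have hclen : (factor w i (aL - 1) ++ factor w aL (i + p - 1)).length = p := by
      rw [← hc_def, factor_length]; omega
    -- the Lyndon interval word u and its suffix at aL
    set u := factor w i (i + ℓ - 1) with hu_def
    have hdpl : aL - i + p ≤ ℓ := by omega
    have hutake : u.take p = factor w i (i + p - 1) :=
      factor_take w hp1 (by omega)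
    have htdrop : u.drop (aL - i) = factor w aL (i + ℓ - 1) := by
      rw [hu_def, factor_drop w (by omega : aL - i ≤ (i + ℓ - 1) - i)]
      congr 1
      omega
    have httake : (factor w aL (i + ℓ - 1)).take p = v := by
      rw [factor_take w hp1 (by omega), show aL + p - 1 = bL by omega]
      exact hfacL
    have hulen : aL - i + p ≤ u.length := by
      rw [hu_def, factor_length]; omega
    have htsuf : factor w aL (i + ℓ - 1) <:+ u := by
      rw [← htdrop]; exact List.drop_suffix _ _
    have htneu : factor w aL (i + ℓ - 1) ≠ u := by
      intro h
      have := congrArg List.length h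
      rw [← htdrop, List.length_drop] at this
      omega
    have htnenil : factor w aL (i + ℓ - 1) ≠ [] := by
      intro h
      have := congrArg List.length h
      rw [← htdrop, List.length_drop] at this
      simp at this
      omega
    have hlex_ut : List.Lex (· < ·) u (factor w aL (i + ℓ - 1)) :=
      hlyn.2 _ htsuf htneu htnenil
    have hlex_tu : List.Lex (· < ·) (factor w aL (i + ℓ - 1)) u := by
      have h := aux_lex_append hlex_vc (by omega)
        ((factor w aL (i + ℓ - 1)).drop p) (u.drop p)
      rw [← httake, ← hc_def, ← hutake] at h
      rw [List.take_append_drop, List.take_append_drop] at h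
      exact h
    exact aux_lex_asymm hlex_ut hlex_tu
  · -- ¬UseOrd case: v is Lyndon w.r.t. >, Oroot is greatest proper suffix position
    rcases hOcase with ⟨hu, -⟩ | ⟨-, hgs⟩
    · exact absurd hu hnu
    exfalso
    have hlenw : bL < w.length := by omega
    have hs_shift : factor w aO (aL - 1) = factor w (aO + p) bL := by
      have h := factor_shift w p hper (a := aO) (b := aL - 1) (by omega) (by omega) (by omega)
      rw [show aL - 1 + p = bL by omega] at h
      exact h
    have hc_def : factor w aO (aO + p - 1) =
        factor w aO (aL - 1) ++ factor w aL (aO + p - 1) := by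
      have h := factor_split w (a := aO) (m := aL) (b := aO + p - 1) (by omega) (by omega)
      exact h
    have hv_def : factor w aL bL =
        factor w aL (aO + p - 1) ++ factor w aO (aL - 1) := by
      have h := factor_split w (a := aL) (m := aO + p) (b := bL) (by omega) (by omega)
      rw [← hs_shift] at h
      exact h
    have hsne : factor w aO (aL - 1) ≠ [] := by
      apply List.ne_nil_of_length_pos
      rw [factor_length]; omega
    have htne : factor w aL (aO + p - 1) ≠ [] := by
      apply List.ne_nil_of_length_pos
      rw [factor_length]; omega
    have hveq : v = factor w aL (aO + p - 1) ++ factor w aO (aL - 1) := by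
      rw [← hfacL]; exact hv_def
    have hlex_vc : List.Lex (· > ·) v (factor w aO (aL - 1) ++ factor w aL (aO + p - 1)) :=
      aux_lyndon_rot hlv hveq htne hsne
    have hclen : (factor w aO (aL - 1) ++ factor w aL (aO + p - 1)).length = p := by
      rw [← hc_def, factor_length]; omega
    have hlex_cv : List.Lex (· < ·)
        (factor w aO (aL - 1) ++ factor w aL (aO + p - 1)) v :=
      aux_lex_swap hlex_vc (by omega)
    have hSLtake : (factor w aL jr).take p = v := by
      rw [factor_take w hp1 (by omega), show aL + p - 1 = bL by omega]
      exact hfacL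
    have hSOtake : (factor w aO jr).take p =
        factor w aO (aL - 1) ++ factor w aL (aO + p - 1) := by
      rw [factor_take w hp1 (by omega)]
      exact hc_def
    have hgt : List.Lex (· < ·) (factor w aL jr) (factor w aO jr) :=
      hgs.2.2 aL (by omega) (by omega) (by omega)
    have hlex_OL : List.Lex (· < ·) (factor w aO jr) (factor w aL jr) := by
      have h := aux_lex_append hlex_cv (by omega)
        ((factor w aO jr).drop p) ((factor w aL jr).drop p)
      rw [← hSOtake, ← hSLtake] at h
      rw [List.take_append_drop, List.take_append_drop] at h
      exact h
    exact aux_lex_asymm hgt hlex_OL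
end

section
/- For any word and any interval [i..j] of its positions, there is at most one run whose Oroot starts after position j while its Lroot is an interval contained in [i..j]. -/
open List

universe u

section helpers

variable {β : Type u}

lemma minPeriod_spec_s15 (u : List β) : HasPeriodLen u (minPeriod u) := by
  have : {p | HasPeriodLen u p}.Nonempty := ⟨u.length + 1, by
    constructor
    · omega
    · intro k hk; omega⟩
  exact Nat.sInf_mem this

lemma minPeriod_pos (u : List β) : 1 ≤ minPeriod u := (minPeriod_spec_s15 u).1

lemma factor_length_s15 (w : List β) (i j : ℕ) (hij : i ≤ j) (hj : j < w.length) :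
    (factor w i j).length = j - i + 1 := by
  simp [factor]; omega

lemma factor_getElem?_s15 (w : List β) (i j k : ℕ) (hk : k < j - i + 1) :
    (factor w i j)[k]? = w[i + k]? := by
  unfold factor
  rw [List.getElem?_take]
  simp [hk, List.getElem?_drop]

lemma period_w (w : List β) (i j q : ℕ) (hij : i ≤ j) (hj : j < w.length)
    (h : HasPeriodLen (factor w i j) q) (x : ℕ) (hx : i ≤ x) (hxq : x + q ≤ j) :
    w[x]? = w[x + q]? := by
  have hlen := factor_length_s15 w i j hij hj
  have h2 := h.2 (x - i) (by rw [hlen]; omega)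
  rw [factor_getElem?_s15 w i j _ (by omega), factor_getElem?_s15 w i j _ (by omega)] at h2
  have e1 : i + (x - i) = x := by omega
  have e2 : i + (x - i + q) = x + q := by omega
  rwa [e1, e2] at h2

lemma factor_shift_s15 (w : List β) (i j q : ℕ) (hij : i ≤ j) (hj : j < w.length)
    (h : HasPeriodLen (factor w i j) q) (x y : ℕ) (hx : i ≤ x) (hxy : x ≤ y)
    (hyq : y + q ≤ j) : factor w x y = factor w (x + q) (y + q) := by
  apply List.ext_getElem?
  intro k
  by_cases hk : k < y - x + 1
  · rw [factor_getElem?_s15 _ _ _ _ hk, factor_getElem?_s15 _ _ _ _ (by omega)]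
    have hp := period_w w i j q hij hj h (x + k) (by omega) (by omega)
    rw [hp]; congr 1; omega
  · have l1 : (factor w x y).length ≤ k := by
      rw [factor_length_s15 w x y hxy (by omega)]; omega
    have l2 : (factor w (x + q) (y + q)).length ≤ k := by
      rw [factor_length_s15 w _ _ (by omega) (by omega)]; omega
    rw [List.getElem?_eq_none l1, List.getElem?_eq_none l2]

lemma factor_prefix_shift (w : List β) (i j q : ℕ) (hij : i ≤ j) (hj : j < w.length)
    (h : HasPeriodLen (factor w i j) q) (x : ℕ) (hx : i ≤ x) (hxq : x + q ≤ j) :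
    factor w (x + q) j <+: factor w x j := by
  have h1 : factor w x (j - q) = factor w (x + q) j := by
    have hs := factor_shift_s15 w i j q hij hj h x (j - q) hx (by omega) (by omega)
    rw [hs]; congr 1; omega
  rw [← h1]
  have h2 : factor w x (j - q) = (factor w x j).take (j - q - x + 1) := by
    unfold factor
    rw [List.take_take]
    congr 1
    omega
  rw [h2]
  exact List.take_prefix _ _

lemma not_lex_append (r : β → β → Prop) (hirr : ∀ x, ¬ r x x) :
    ∀ (t u : List β), ¬ List.Lex r (t ++ u) t := by
  intro t
  induction t with
  | nil => intro u h; cases h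
  | cons a t ih =>
    intro u h
    cases h with
    | cons h => exact ih u h
    | rel h => exact hirr a h

lemma key_lemma {β : Type u} [LinearOrder β] (w : List β) (i1 j1 a b o p j : ℕ)
    (hL : IsLroot w i1 j1 a b) (hO : IsOroot w i1 j1 o p)
    (hbj : b ≤ j) (hjo : j < o) :
    a = i1 ∧ b = j ∧ o = j + 1 ∧
    minPeriod (factor w i1 j1) = j + 1 - i1 ∧
    i1 ≤ j ∧ j + (j + 1 - i1) ≤ j1 ∧ j1 < w.length ∧
    ∃ r : β → β → Prop, (∀ x, ¬ r x x) ∧ IsLyndonWrt r (factor w i1 j) := by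
  obtain ⟨hRun, v, hvord, hia, hbj1, hlen, hfac, hminL⟩ := hL
  obtain ⟨hij1, hj1w, h2p, hleft, hright⟩ := hRun
  set q := minPeriod (factor w i1 j1) with hqdef
  have hq1 : 1 ≤ q := minPeriod_pos _
  have hspec : HasPeriodLen (factor w i1 j1) q := minPeriod_spec_s15 _
  -- length of v is q
  have hconj : IsConjWord (factor w i1 (i1 + q - 1)) v := by
    rcases hvord with ⟨_, _, hc⟩ | ⟨_, _, hc⟩ <;> exact hc
  have hvlen : v.length = q := by
    obtain ⟨s, t, hst, hv⟩ := hconj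
    have hfl : (factor w i1 (i1 + q - 1)).length = q := by
      rw [factor_length_s15 w _ _ (by omega) (by omega)]; omega
    rw [hst] at hfl
    rw [hv]
    simp only [List.length_append] at hfl ⊢
    omega
  obtain ⟨hRunO, hpq, hcase⟩ := hO
  -- the Oroot starts within one period of the run start
  have ho_le : o ≤ i1 + q := by
    by_contra hc
    push_neg at hc
    rcases hcase with ⟨huse, hio, hpj, v', hv', hfac', hmin'⟩ | ⟨huse, hio, hoj, hmax⟩
    · apply hmin' (o - q) (by omega) (by omega)
      have hs := factor_shift_s15 w i1 j1 q (by omega) hj1w hspec (o - q) (o - 1)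
        (by omega) (by omega) (by omega)
      rw [← hfac']
      have e3 : o - q + q - 1 = o - 1 := by omega
      have e1 : o - q + q = o := by omega
      have e2 : o - 1 + q = p := by omega
      rw [e3, hs, e1, e2]
    · have hpre := factor_prefix_shift w i1 j1 q (by omega) hj1w hspec (o - q)
        (by omega) (by omega)
      have e : o - q + q = o := by omega
      rw [e] at hpre
      obtain ⟨rest, hrest⟩ := hpre
      have hlt := hmax (o - q) (by omega) (by omega) (by omega)
      rw [← hrest] at hlt
      exact not_lex_append _ (fun x => lt_irrefl x) _ _ hlt
  have ha : a = i1 := by omega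
  have hb : b = j := by omega
  have ho : o = j + 1 := by omega
  have hq : q = j + 1 - i1 := by omega
  refine ⟨ha, hb, ho, hq, by omega, by omega, hj1w, ?_⟩
  rw [ha, hb] at hfac
  rcases hvord with ⟨_, hLy, _⟩ | ⟨_, hLy, _⟩
  · exact ⟨(· < ·), fun x => lt_irrefl x, hfac ▸ hLy⟩
  · exact ⟨(· > ·), fun x => lt_irrefl x, hfac ▸ hLy⟩

lemma step1 (w : List β) (j i1 j1 i2 j2 : ℕ) (h12 : i1 < i2) (hi2j : i2 ≤ j)
    (hq1 : minPeriod (factor w i1 j1) = j + 1 - i1)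
    (hq2 : minPeriod (factor w i2 j2) = j + 1 - i2)
    (hjq1 : j + (j + 1 - i1) ≤ j1) (hjq2 : j + (j + 1 - i2) ≤ j2)
    (hj1w : j1 < w.length) (hj2w : j2 < w.length)
    (r1 : β → β → Prop) (hr1 : ∀ x, ¬ r1 x x)
    (hLy1 : IsLyndonWrt r1 (factor w i1 j)) : False := by
  have hq21 : j + 1 - i2 < j + 1 - i1 := by omega
  have hq2pos : 1 ≤ j + 1 - i2 := by omega
  have hjlt : j < w.length := by omega
  have hA1 : factor w i1 j = factor w (j + 1) (j + (j + 1 - i1)) := by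
    have hs := factor_shift_s15 w i1 j1 (j + 1 - i1) (by omega) hj1w
      (hq1 ▸ minPeriod_spec_s15 (factor w i1 j1)) i1 j (le_refl _) (by omega) (by omega)
    rw [hs]; congr 1; omega
  have hA2 : factor w i2 j = factor w (j + 1) (j + (j + 1 - i2)) := by
    have hs := factor_shift_s15 w i2 j2 (j + 1 - i2) (by omega) hj2w
      (hq2 ▸ minPeriod_spec_s15 (factor w i2 j2)) i2 j (le_refl _) (by omega) (by omega)
    rw [hs]; congr 1; omega
  -- factor w i2 j is a prefix of factor w i1 j
  have hpre : factor w i2 j = (factor w i1 j).take (j + 1 - i2) := by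
    rw [hA1, hA2]
    unfold factor
    rw [List.take_take]
    congr 1 <;> omega
  -- factor w i2 j is a suffix of factor w i1 j
  have hsuf : factor w i2 j = (factor w i1 j).drop (i2 - i1) := by
    unfold factor
    rw [List.drop_take, List.drop_drop]
    have e1 : i1 + (i2 - i1) = i2 := by omega
    have e2 : j - i1 + 1 - (i2 - i1) = j - i2 + 1 := by omega
    rw [e1, e2]
  have hlen1 : (factor w i1 j).length = (j + 1 - i1) := by
    rw [factor_length_s15 w _ _ (by omega) hjlt]; omega
  have hlen2 : (factor w i2 j).length = (j + 1 - i2) := by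
    rw [factor_length_s15 w _ _ (by omega) hjlt]; omega
  have hne : factor w i2 j ≠ factor w i1 j := by
    intro h
    rw [← h] at hlen1
    omega
  have hnil : factor w i2 j ≠ [] := by
    intro h
    rw [h] at hlen2
    simp at hlen2
    omega
  have hsuffix : factor w i2 j <:+ factor w i1 j :=
    ⟨(factor w i1 j).take (i2 - i1), by rw [hsuf]; exact List.take_append_drop _ _⟩
  have hlt := hLy1.2 (factor w i2 j) hsuffix hne hnil
  have hdecomp : factor w i2 j ++ (factor w i1 j).drop (j + 1 - i2) = factor w i1 j := by
    rw [hpre]; exact List.take_append_drop _ _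
  rw [← hdecomp] at hlt
  exact not_lex_append r1 hr1 _ _ hlt

lemma step2 (w : List β) (i0 j j1 j2 : ℕ) (h12 : j1 < j2)
    (hq1 : minPeriod (factor w i0 j1) = j + 1 - i0)
    (hq2 : minPeriod (factor w i0 j2) = j + 1 - i0)
    (hi0 : i0 ≤ j) (hjq1 : j + (j + 1 - i0) ≤ j1) (hjq2 : j + (j + 1 - i0) ≤ j2)
    (hj2w : j2 < w.length)
    (hright : j1 + 1 < w.length →
      minPeriod (factor w i0 j1) < minPeriod (factor w i0 (j1 + 1))) : False := by
  have hqpos : 1 ≤ j + 1 - i0 := by omega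
  have hper : HasPeriodLen (factor w i0 (j1 + 1)) (j + 1 - i0) := by
    constructor
    · omega
    · intro k hk
      have hlen : (factor w i0 (j1 + 1)).length = j1 + 1 - i0 + 1 := by
        rw [factor_length_s15 w _ _ (by omega) (by omega)]
      rw [hlen] at hk
      rw [factor_getElem?_s15 w _ _ _ (by omega), factor_getElem?_s15 w _ _ _ (by omega)]
      have hp := period_w w i0 j2 (j + 1 - i0) (by omega) hj2w
        (hq2 ▸ minPeriod_spec_s15 (factor w i0 j2)) (i0 + k) (by omega) (by omega)
      rw [hp]; congr 1; omega
  have hle : minPeriod (factor w i0 (j1 + 1)) ≤ (j + 1 - i0) := Nat.sInf_le hper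
  have := hright (by omega)
  omega

end helpers

/-- For any interval `[i..j]` of positions, there is at most one run whose Oroot starts
after position `j` while its Lroot is contained in `[i..j]`. -/

theorem at_most_one_oroot_after_interval {α : Type u} [LinearOrder α] (w : List α)
    (i j : ℕ) (i1 j1 a1 b1 o1 p1 i2 j2 a2 b2 o2 p2 : ℕ)
    (hL1 : IsLroot w i1 j1 a1 b1) (hO1 : IsOroot w i1 j1 o1 p1)
    (h1l : i ≤ a1) (h1r : b1 ≤ j) (h1o : j < o1)
    (hL2 : IsLroot w i2 j2 a2 b2) (hO2 : IsOroot w i2 j2 o2 p2)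
    (h2l : i ≤ a2) (h2r : b2 ≤ j) (h2o : j < o2) :
    i1 = i2 ∧ j1 = j2 := by
  obtain ⟨ha1, hb1, ho1, hq1, hij1, hjq1, hj1w, r1, hr1, hLy1⟩ :=
    key_lemma w i1 j1 a1 b1 o1 p1 j hL1 hO1 h1r h1o
  obtain ⟨ha2, hb2, ho2, hq2, hij2, hjq2, hj2w, r2, hr2, hLy2⟩ :=
    key_lemma w i2 j2 a2 b2 o2 p2 j hL2 hO2 h2r h2o
  have hii : i1 = i2 := by
    rcases lt_trichotomy i1 i2 with h | h | h
    · exact (step1 w j i1 j1 i2 j2 h hij2 hq1 hq2 hjq1 hjq2 hj1w hj2w r1 hr1 hLy1).elim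
    · exact h
    · exact (step1 w j i2 j2 i1 j1 h hij1 hq2 hq1 hjq2 hjq1 hj2w hj1w r2 hr2 hLy2).elim
  subst hii
  refine ⟨rfl, ?_⟩
  rcases lt_trichotomy j1 j2 with h | h | h
  · exact (step2 w i1 j j1 j2 h hq1 hq2 hij1 hjq1 hjq2 hj2w hL1.1.2.2.2.2).elim
  · exact h
  · exact (step2 w i1 j j2 j1 h hq2 hq1 hij1 hjq2 hjq1 hj1w hL2.1.2.2.2.2).elim
end

section
/- If two different Oroots obtained with respect to the same alphabet order overlap as intervals, then their overlap equals the shorter of the two Oroots; consequently, two same-order Oroots are either nested (one contained in the other) or disjoint. -/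
open List

universe u

section Helpers

variable {α : Type u}

theorem oroot_lex_trans {r : α → α → Prop} (ht : ∀ a b c, r a b → r b c → r a c) :
    ∀ {l1 l2 l3 : List α}, List.Lex r l1 l2 → List.Lex r l2 l3 → List.Lex r l1 l3 := by
  intro l1 l2 l3 h12
  induction h12 generalizing l3 with
  | nil =>
    intro h23
    cases h23 with
    | cons _ => exact List.Lex.nil
    | rel _ => exact List.Lex.nil
  | @rel a t1 b t2 hab =>
    intro h23
    cases h23 with
    | cons _ => exact List.Lex.rel hab
    | rel hbc => exact List.Lex.rel (ht _ _ _ hab hbc)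
  | @cons a t1 t2 h ih =>
    intro h23
    cases h23 with
    | cons h' => exact List.Lex.cons (ih h')
    | rel hbc => exact List.Lex.rel hbc

theorem oroot_lex_irrefl {r : α → α → Prop} (hi : ∀ a, ¬ r a a) :
    ∀ l : List α, ¬ List.Lex r l l := by
  intro l h
  induction l with
  | nil => cases h
  | cons a t ih =>
    cases h with
    | cons h => exact ih h
    | rel h => exact hi a h

theorem oroot_lex_of_prefix {r : α → α → Prop} :
    ∀ {l1 l2 : List α}, l1 <+: l2 → l1 ≠ l2 → List.Lex r l1 l2 := by
  intro l1
  induction l1 with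
  | nil =>
    intro l2 _ hne
    cases l2 with
    | nil => exact absurd rfl hne
    | cons b t => exact List.Lex.nil
  | cons a t ih =>
    intro l2 hp hne
    cases l2 with
    | nil => exact absurd (List.eq_nil_of_prefix_nil hp) (by simp)
    | cons b u =>
      rw [List.cons_prefix_cons] at hp
      obtain ⟨rfl, hp⟩ := hp
      exact List.Lex.cons (ih hp (fun h => hne (by rw [h])))

theorem oroot_lex_append {r : α → α → Prop} {l1 l2 : List α} (h : List.Lex r l1 l2)
    (hnp : ¬ l1 <+: l2) (s t : List α) : List.Lex r (l1 ++ s) (l2 ++ t) := by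
  induction h with
  | nil => exact absurd (List.nil_prefix) hnp
  | @rel a t1 b t2 hab => exact List.Lex.rel hab
  | @cons a t1 t2 h ih =>
    refine List.Lex.cons (ih ?_)
    intro hp
    exact hnp (List.cons_prefix_cons.mpr ⟨rfl, hp⟩)

theorem oroot_lex_of_agree {r : α → α → Prop} :
    ∀ (m : ℕ) {l1 l2 : List α} {c1 c2 : α}, l1[m]? = some c1 → l2[m]? = some c2 →
      (∀ t, t < m → l1[t]? = l2[t]?) → r c1 c2 → List.Lex r l1 l2 := by
  intro m
  induction m with
  | zero =>
    intro l1 l2 c1 c2 h1 h2 _ hrr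
    cases l1 with
    | nil => simp at h1
    | cons a t1 =>
      cases l2 with
      | nil => simp at h2
      | cons b t2 =>
        simp only [List.getElem?_cons_zero, Option.some.injEq] at h1 h2
        subst h1; subst h2
        exact List.Lex.rel hrr
  | succ n ih =>
    intro l1 l2 c1 c2 h1 h2 hag hrr
    cases l1 with
    | nil => simp at h1
    | cons a t1 =>
      cases l2 with
      | nil => simp at h2
      | cons b t2 =>
        have h0 := hag 0 (Nat.succ_pos n)
        simp only [List.getElem?_cons_zero, Option.some.injEq] at h0
        subst h0
        refine List.Lex.cons (ih ?_ ?_ ?_ hrr)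
        · simpa using h1
        · simpa using h2
        · intro t htn
          have := hag (t + 1) (by omega)
          simpa using this

theorem oroot_factor_length (w : List α) (i j : ℕ) (hij : i ≤ j) (hj : j < w.length) :
    (factor w i j).length = j - i + 1 := by
  simp only [factor, List.length_take, List.length_drop]
  omega

theorem oroot_factor_getElem? (w : List α) (i j t : ℕ) (ht : t ≤ j - i) :
    (factor w i j)[t]? = w[i + t]? := by
  rw [factor, List.getElem?_take, if_pos (by omega), List.getElem?_drop]

theorem oroot_factor_getElem?_none (w : List α) (i j t : ℕ) (ht : j - i + 1 ≤ t) :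
    (factor w i j)[t]? = none := by
  rw [factor, List.getElem?_take, if_neg (by omega)]

theorem oroot_factor_drop (w : List α) (i d j : ℕ) (h : i + d ≤ j) :
    (factor w i j).drop d = factor w (i + d) j := by
  simp only [factor, List.drop_take, List.drop_drop]
  congr 1
  omega

theorem oroot_factor_take (w : List α) (i k j : ℕ) (hkj : k ≤ j) :
    factor w i k = (factor w i j).take (k - i + 1) := by
  simp only [factor, List.take_take]
  congr 1
  omega

theorem oroot_factor_split (w : List α) (i k j : ℕ) (hik : i ≤ k) (hkj : k < j) :
    factor w i j = factor w i k ++ factor w (k + 1) j := by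
  simp only [factor]
  rw [show j - i + 1 = (k - i + 1) + (j - k) from by omega, List.take_add, List.drop_drop,
    show i + (k - i + 1) = k + 1 from by omega, show j - k = j - (k + 1) + 1 from by omega]

end Helpers

section Main

variable {α : Type u}

theorem oroot_no_proper_overlap (r : α → α → Prop)
    (ht : ∀ a b c : α, r a b → r b c → r a c) (hi : ∀ a : α, ¬ r a a)
    {w : List α} {i1 j1 a1 b1 i2 j2 a2 b2 : ℕ}
    (h1 : IsOrootOrd r w i1 j1 a1 b1) (h2 : IsOrootOrd r w i2 j2 a2 b2)
    (h12 : a1 < a2) (h21 : a2 ≤ b1) (hbb : b1 < b2) : False := by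
  obtain ⟨run1, use1, hp1, hia1, hbj1, ⟨lyn1, -⟩, -⟩ := h1
  obtain ⟨run2, -, hp2, hia2, hbj2, ⟨lyn2, -⟩, -⟩ := h2
  obtain ⟨hij1, hj1w, -, -, -⟩ := run1
  obtain ⟨hij2, hj2w, -, -, -⟩ := run2
  set p1 := minPeriod (factor w i1 j1) with hp1def
  set p2 := minPeriod (factor w i2 j2) with hp2def
  -- p1 is a genuine period of the run factor
  have hfne : {p | HasPeriodLen (factor w i1 j1) p}.Nonempty := by
    refine ⟨(factor w i1 j1).length, ?_, ?_⟩
    · rw [oroot_factor_length w i1 j1 (le_of_lt hij1) hj1w]; omega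
    · intro k hk; omega
  have hper' : HasPeriodLen (factor w i1 j1) p1 := by
    rw [hp1def, minPeriod]; exact Nat.sInf_mem hfne
  obtain ⟨hp1pos, hper⟩ := hper'
  have hfne2 : {p | HasPeriodLen (factor w i2 j2) p}.Nonempty := by
    refine ⟨(factor w i2 j2).length, ?_, ?_⟩
    · rw [oroot_factor_length w i2 j2 (le_of_lt hij2) hj2w]; omega
    · intro k hk; omega
  have hper2' : HasPeriodLen (factor w i2 j2) p2 := by
    rw [hp2def, minPeriod]; exact Nat.sInf_mem hfne2
  have hp2pos : 1 ≤ p2 := hper2'.1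
  clear hper2' hfne hfne2
  have hflen : (factor w i1 j1).length = j1 - i1 + 1 :=
    oroot_factor_length w i1 j1 (le_of_lt hij1) hj1w
  -- translate the period to positions of w
  have hW : ∀ k, i1 ≤ k → k + p1 ≤ j1 → w[k]? = w[k + p1]? := by
    intro k hk1 hk2
    have h := hper (k - i1) (by omega)
    rw [oroot_factor_getElem? w i1 j1 (k - i1) (by omega),
      oroot_factor_getElem? w i1 j1 (k - i1 + p1) (by omega),
      show i1 + (k - i1) = k from by omega,
      show i1 + (k - i1 + p1) = k + p1 from by omega] at h
    exact h
  obtain ⟨hlyn1ne, hlyn1⟩ := lyn1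
  obtain ⟨hlyn2ne, hlyn2⟩ := lyn2
  have hb1w : b1 < w.length := by omega
  have hb2w : b2 < w.length := by omega
  have hl1len : (factor w a1 b1).length = p1 :=
    (oroot_factor_length w a1 b1 (by omega) hb1w).trans (by omega)
  have hl2len : (factor w a2 b2).length = p2 :=
    (oroot_factor_length w a2 b2 (by omega) hb2w).trans (by omega)
  have hylen : (factor w a2 b1).length = b1 - a2 + 1 :=
    oroot_factor_length w a2 b1 h21 hb1w
  have hy'len : (factor w (b1 + 1) b2).length = b2 - b1 :=
    (oroot_factor_length w (b1 + 1) b2 (by omega) hb2w).trans (by omega)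
  -- λ1 ≺ y  (y is a proper nonempty suffix of λ1)
  have hydrop : (factor w a1 b1).drop (a2 - a1) = factor w a2 b1 := by
    have := oroot_factor_drop w a1 (a2 - a1) b1 (by omega)
    rwa [show a1 + (a2 - a1) = a2 from by omega] at this
  have hLex1 : List.Lex r (factor w a1 b1) (factor w a2 b1) := by
    refine hlyn1 _ (hydrop ▸ List.drop_suffix _ _) ?_ ?_
    · intro h; rw [← h] at hl1len; omega
    · intro h; rw [h] at hylen; simp only [List.length_nil] at hylen; omega
  -- λ2 ≺ y'  (y' is a proper nonempty suffix of λ2)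
  have hy'drop : (factor w a2 b2).drop (b1 + 1 - a2) = factor w (b1 + 1) b2 := by
    have := oroot_factor_drop w a2 (b1 + 1 - a2) b2 (by omega)
    rwa [show a2 + (b1 + 1 - a2) = b1 + 1 from by omega] at this
  have hLex2 : List.Lex r (factor w a2 b2) (factor w (b1 + 1) b2) := by
    refine hlyn2 _ (hy'drop ▸ List.drop_suffix _ _) ?_ ?_
    · intro h; rw [← h] at hl2len; omega
    · intro h; rw [h] at hy'len; simp only [List.length_nil] at hy'len; omega
  -- y ≺ λ2  (y is a proper prefix of λ2)
  have hytake : factor w a2 b1 = (factor w a2 b2).take (b1 - a2 + 1) :=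
    oroot_factor_take w a2 b1 b2 (by omega)
  have hLex3 : List.Lex r (factor w a2 b1) (factor w a2 b2) := by
    refine oroot_lex_of_prefix (hytake ▸ List.take_prefix _ _) ?_
    intro h; rw [h] at hylen; omega
  -- entries of y' and x := factor w a1 (b2 - p1)
  have hxlen : (factor w a1 (b2 - p1)).length = b2 - b1 :=
    (oroot_factor_length w a1 (b2 - p1) (by omega) (by omega)).trans (by omega)
  have hy'get : ∀ t, t < b2 - b1 → (factor w (b1 + 1) b2)[t]? = w[b1 + 1 + t]? := by
    intro t htL
    exact oroot_factor_getElem? w (b1 + 1) b2 t (by omega)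
  have hxget : ∀ t, t < b2 - b1 → (factor w a1 (b2 - p1))[t]? = w[a1 + t]? := by
    intro t htL
    exact oroot_factor_getElem? w a1 (b2 - p1) t (by omega)
  have hagree : ∀ t, t < b2 - b1 → b1 + 1 + t ≤ j1 →
      (factor w (b1 + 1) b2)[t]? = (factor w a1 (b2 - p1))[t]? := by
    intro t htL htj
    rw [hy'get t htL, hxget t htL]
    have := hW (a1 + t) (by omega) (by omega)
    rw [show a1 + t + p1 = b1 + 1 + t from by omega] at this
    exact this.symm
  -- chain piece: λ2 ≺ x
  have hchain : List.Lex r (factor w a2 b2) (factor w a1 (b2 - p1)) := by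
    by_cases hcase : b2 ≤ j1
    · have hyx : factor w (b1 + 1) b2 = factor w a1 (b2 - p1) := by
        apply List.ext_getElem?
        intro n
        by_cases hn : n < b2 - b1
        · exact hagree n hn (by omega)
        · rw [oroot_factor_getElem?_none w (b1 + 1) b2 n (by omega),
            oroot_factor_getElem?_none w a1 (b2 - p1) n (by omega)]
      exact hyx ▸ hLex2
    · -- the run [i1..j1] ends before b2; use UseOrd at j1+1
      rcases use1 with hend | ⟨c, d, hc, hd, hrcd⟩
      · omega
      · have hy'c : (factor w (b1 + 1) b2)[j1 - b1]? = some c := by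
          rw [hy'get (j1 - b1) (by omega), show b1 + 1 + (j1 - b1) = j1 + 1 from by omega]
          exact hc
        have hxd : (factor w a1 (b2 - p1))[j1 - b1]? = some d := by
          rw [hxget (j1 - b1) (by omega), show a1 + (j1 - b1) = j1 + 1 - p1 from by omega]
          exact hd
        have hLexyx : List.Lex r (factor w (b1 + 1) b2) (factor w a1 (b2 - p1)) := by
          refine oroot_lex_of_agree (j1 - b1) hy'c hxd ?_ hrcd
          intro t htt
          exact hagree t (by omega) (by omega)
        exact oroot_lex_trans ht hLex2 hLexyx
  -- now close the chain, two cases on whether x fits inside λ1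
  by_cases hxcase : b2 - b1 ≤ p1
  · -- x is a prefix of λ1
    have hxtake : factor w a1 (b2 - p1) = (factor w a1 b1).take (b2 - p1 - a1 + 1) :=
      oroot_factor_take w a1 (b2 - p1) b1 (by omega)
    have hxpre : factor w a1 (b2 - p1) <+: factor w a1 b1 :=
      hxtake ▸ List.take_prefix _ _
    have hxl1 : List.Lex r (factor w a2 b2) (factor w a1 b1) := by
      by_cases hxeq : factor w a1 (b2 - p1) = factor w a1 b1
      · exact hxeq ▸ hchain
      · exact oroot_lex_trans ht hchain (oroot_lex_of_prefix hxpre hxeq)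
    exact oroot_lex_irrefl hi (factor w a2 b2)
      (oroot_lex_trans ht (oroot_lex_trans ht hxl1 hLex1) hLex3)
  · -- λ1 is a proper prefix of x
    have hxsplit : factor w a1 (b2 - p1) =
        factor w a1 b1 ++ factor w (b1 + 1) (b2 - p1) :=
      oroot_factor_split w a1 b1 (b2 - p1) (by omega) (by omega)
    have hl2split : factor w a2 b2 = factor w a2 b1 ++ factor w (b1 + 1) b2 :=
      oroot_factor_split w a2 b1 b2 h21 hbb
    have hLexX : List.Lex r (factor w a1 (b2 - p1)) (factor w a2 b2) := by
      rw [hxsplit, hl2split]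
      refine oroot_lex_append hLex1 ?_ _ _
      intro hp
      have := hp.length_le
      rw [hl1len, hylen] at this
      omega
    exact oroot_lex_irrefl hi (factor w a2 b2) (oroot_lex_trans ht hchain hLexX)

end Main

/-- If two different Oroots obtained with respect to the same alphabet order overlap as
intervals, their overlap is the shorter of the two; consequently they are nested. -/
theorem same_order_oroots_nested_or_disjoint {α : Type u} [LinearOrder α]
    (r : α → α → Prop) (hr : r = ((· < ·) : α → α → Prop) ∨ r = ((· > ·) : α → α → Prop))
    (w : List α) (i1 j1 a1 b1 i2 j2 a2 b2 : ℕ)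
    (h1 : IsOrootOrd r w i1 j1 a1 b1) (h2 : IsOrootOrd r w i2 j2 a2 b2)
    (hne : (a1, b1) ≠ (a2, b2)) (hov : max a1 a2 ≤ min b1 b2) :
    (a1 ≤ a2 ∧ b2 ≤ b1) ∨ (a2 ≤ a1 ∧ b1 ≤ b2) := by
  have ht : ∀ a b c : α, r a b → r b c → r a c := by
    rcases hr with rfl | rfl
    · exact fun a b c h h' => lt_trans h h'
    · exact fun a b c h h' => lt_trans h' h
  have hi : ∀ a : α, ¬ r a a := by
    rcases hr with rfl | rfl
    · exact fun a => lt_irrefl a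
    · exact fun a => lt_irrefl a
  have hov1 : a2 ≤ b1 := by omega
  have hov2 : a1 ≤ b2 := by omega
  rcases lt_trichotomy a1 a2 with h | h | h
  · rcases le_or_gt b2 b1 with hb | hb
    · exact Or.inl ⟨le_of_lt h, hb⟩
    · exact (oroot_no_proper_overlap r ht hi h1 h2 h hov1 hb).elim
  · rcases le_total b2 b1 with hb | hb
    · exact Or.inl ⟨le_of_eq h, hb⟩
    · exact Or.inr ⟨le_of_eq h.symm, hb⟩
  · rcases le_or_gt b1 b2 with hb | hb
    · exact Or.inr ⟨le_of_lt h, hb⟩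
    · exact (oroot_no_proper_overlap r ht hi h2 h1 h hov2 hb).elim
end
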